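/- arXiv:1406.0217 — 2 statements merged into one kernel-verified Lean document; each statement's English description precedes it below -/
import Mathlib

section
/- For every n ≥ 3 and every pair of binary phylogenetic trees T, T' on leaf set {1,…,n}, the number of characters f for which T is a maximum parsimony tree equals the number of characters f for which T' is a maximum parsimony tree. That is, for a single character (k = 1), the probability of being a maximum parsimony tree is the same for every tree in UB(n). -/
open Classical

/-- A binary phylogenetic tree on leaf set `{1, …, n}` (represented by `Fin n`),
with vertex set `Fin (2 * n - 2)`: a connected acyclic simple graph in which every
vertex has degree 1 or 3, together with a bijective labeling of the degree-1
vertices (the leaves) by `Fin n`.  The collection of such trees is `UB(n)`. -/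
structure PhyloTree (n : ℕ) where
  adj : SimpleGraph (Fin (2 * n - 2))
  connected : adj.Connected
  acyclic : adj.IsAcyclic
  degOneOrThree : ∀ v, (adj.neighborSet v).ncard = 1 ∨ (adj.neighborSet v).ncard = 3
  leaf : Fin n → Fin (2 * n - 2)
  leaf_inj : Function.Injective leaf
  leaf_range : ∀ v, (adj.neighborSet v).ncard = 1 ↔ ∃ i, leaf i = v

/-- The changing number of an assignment `g` of states to the vertices of `T`:
the number of edges of `T` whose two endpoints receive different states. -/
noncomputable def changingNumber {n : ℕ} (T : PhyloTree n)
    (g : Fin (2 * n - 2) → Bool) : ℕ :=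
  Set.ncard {e : Sym2 (Fin (2 * n - 2)) |
    e ∈ T.adj.edgeSet ∧ ∃ u v, e = s(u, v) ∧ g u ≠ g v}

/-- The parsimony score of a character `f` on a tree `T`: the minimum changing
number over all extensions of `f` to the vertices of `T`. -/
noncomputable def ps {n : ℕ} (f : Fin n → Bool) (T : PhyloTree n) : ℕ :=
  sInf {m | ∃ g : Fin (2 * n - 2) → Bool,
    (∀ i, g (T.leaf i) = f i) ∧ changingNumber T g = m}

/-- The set of splits of `T`: for each edge `s(u, v)` of `T`, the bipartition of the
leaf labels into those whose leaf lies in the component of `u` and those whose leaf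
lies in the component of `v`, after deleting the edge. -/
def splits {n : ℕ} (T : PhyloTree n) : Set (Set (Set (Fin n))) :=
  {σ | ∃ u v, s(u, v) ∈ T.adj.edgeSet ∧
    σ = { {i | (T.adj.deleteEdges {s(u, v)}).Reachable (T.leaf i) u},
          {i | (T.adj.deleteEdges {s(u, v)}).Reachable (T.leaf i) v} } }

/-- A character `f` is compatible with a tree `T` if it is non-constant and the
partition `{f⁻¹(0), f⁻¹(1)}` equals the split of `T` at some edge. -/
def CompatibleWithTree {n : ℕ} (f : Fin n → Bool) (T : PhyloTree n) : Prop :=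
  (∃ i j, f i ≠ f j) ∧
    ({ {i | f i = false}, {i | f i = true} } : Set (Set (Fin n))) ∈ splits T

/-- Two characters are compatible with each other if at least one of the four
intersections of their preimage sets is empty. -/
def CharCompatible {n : ℕ} (f₁ f₂ : Fin n → Bool) : Prop :=
  {i | f₁ i = false} ∩ {i | f₂ i = false} = ∅ ∨
  {i | f₁ i = false} ∩ {i | f₂ i = true} = ∅ ∨
  {i | f₁ i = true} ∩ {i | f₂ i = false} = ∅ ∨
  {i | f₁ i = true} ∩ {i | f₂ i = true} = ∅

/-- A tree on six leaves has the symmetric shape if some vertex has all three of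
its neighbors of degree 3. -/
def IsSymmetricShape (T : PhyloTree 6) : Prop :=
  ∃ v, (T.adj.neighborSet v).ncard = 3 ∧
    ∀ u ∈ T.adj.neighborSet v, (T.adj.neighborSet u).ncard = 3

/-- A tree on six leaves has the caterpillar shape if no vertex has all three of
its neighbors of degree 3. -/
def IsCaterpillarShape (T : PhyloTree 6) : Prop :=
  ¬ ∃ v, (T.adj.neighborSet v).ncard = 3 ∧
    ∀ u ∈ T.adj.neighborSet v, (T.adj.neighborSet u).ncard = 3

/-- `T` is a maximum parsimony tree for the sequence of characters `F`. -/
def IsMPTree {n k : ℕ} (F : Fin k → Fin n → Bool) (T : PhyloTree n) : Prop :=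
  ∀ T' : PhyloTree n, (∑ i, ps (F i) T) ≤ ∑ i, ps (F i) T'

open SimpleGraph

section WalkLemmas
variable {V : Type*} {G : SimpleGraph V}

lemma const_of_adj_const {g : V → Bool} (h : ∀ u v, G.Adj u v → g u = g v)
    {a b : V} (hr : G.Reachable a b) : g a = g b := by
  obtain ⟨p⟩ := hr
  induction p with
  | nil => rfl
  | cons hadj p ih => exact (h _ _ hadj).trans ih

lemma isPath_loop_eq_nil {a : V} (p : G.Walk a a) (hp : p.IsPath) : p = Walk.nil := by
  cases p with
  | nil => rfl
  | cons h q =>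
    exfalso
    have := hp.support_nodup
    rw [Walk.support_cons] at this
    exact (List.nodup_cons.mp this).1 (q.end_mem_support)

lemma concat_isPath' {a b x : V} (p : G.Walk a b) (hp : p.IsPath) (h : G.Adj b x)
    (hx : x ∉ p.support) : (p.concat h).IsPath := by
  rw [← Walk.isPath_reverse_iff, Walk.reverse_concat]
  rw [Walk.cons_isPath_iff, Walk.isPath_reverse_iff, Walk.support_reverse]
  exact ⟨hp, by simpa using hx⟩

/-- In a path ending at `b`, at most one edge of the path is incident to `b`. -/
lemma edge_end_unique {a b : V} (p : G.Walk a b) (hp : p.IsPath) (x x' : V)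
    (hx : s(x, b) ∈ p.edges) (hx' : s(x', b) ∈ p.edges) : x = x' := by
  induction p with
  | nil => simp at hx
  | @cons u v w h q ih =>
    rw [Walk.edges_cons, List.mem_cons] at hx hx'
    rw [Walk.cons_isPath_iff] at hp
    cases q with
    | nil =>
      simp only [Walk.edges_nil, List.not_mem_nil, or_false] at hx hx'
      have hne := h.ne
      have e1 : x = u := by
        rcases Sym2.eq_iff.mp hx with ⟨rfl, -⟩ | ⟨-, h4⟩
        · rfl
        · exact absurd h4.symm hne
      have e2 : x' = u := by
        rcases Sym2.eq_iff.mp hx' with ⟨rfl, -⟩ | ⟨-, h4⟩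
        · rfl
        · exact absurd h4.symm hne
      rw [e1, e2]
    | @cons v v2 w h' r =>
      have hbd : u ≠ w := by
        rintro rfl
        exact hp.2 ((Walk.cons h' r).end_mem_support)
      have hcd : v ≠ w := by
        rintro rfl
        have := hp.1.support_nodup
        rw [Walk.support_cons] at this
        exact (List.nodup_cons.mp this).1 (r.end_mem_support)
      rcases hx with h1 | h1
      · rcases Sym2.eq_iff.mp h1 with ⟨rfl, rfl⟩ | ⟨rfl, rfl⟩ <;> tauto
      rcases hx' with h2 | h2
      · rcases Sym2.eq_iff.mp h2 with ⟨rfl, rfl⟩ | ⟨rfl, rfl⟩ <;> tauto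
      exact ih hp.1 h1 h2

/-- In an acyclic graph, a vertex on a path that is adjacent to the endpoint `b`
is joined to `b` by an edge of the path. -/
lemma adj_support_mem_edges (hG : G.IsAcyclic) {a b : V} (p : G.Walk a b) (hp : p.IsPath)
    {x : V} (hx : x ∈ p.support) (hadj : G.Adj b x) : s(x, b) ∈ p.edges := by
  classical
  have hd : (p.dropUntil x hx).IsPath := hp.dropUntil hx
  by_contra hmem
  have hc : (Walk.cons hadj (p.dropUntil x hx)).IsCycle := by
    rw [Walk.cons_isCycle_iff]
    exact ⟨hd, fun hmem' => hmem (by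
      have := Walk.edges_dropUntil_subset p hx hmem'
      rwa [Sym2.eq_swap] at this)⟩
  exact hG _ hc

end WalkLemmas

section MaxPath
variable {V : Type*} [Fintype V]

/-- From `w0`, in a subgraph `G` of an acyclic graph `T`, if every reachable
vertex is either a `T`-leaf or has at least 2 remaining neighbors, then some
`T`-leaf is reachable. -/
lemma exists_deg_one_reachable {T : SimpleGraph V} (hT : T.IsAcyclic)
    {G : SimpleGraph V} (hG : G ≤ T) (w0 : V)
    (H1 : ∀ w, G.Reachable w0 w → w ≠ w0 →
      2 ≤ (G.neighborSet w).ncard ∨ (T.neighborSet w).ncard = 1)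
    (H0 : 1 ≤ (G.neighborSet w0).ncard ∨ (T.neighborSet w0).ncard = 1) :
    ∃ w, G.Reachable w0 w ∧ (T.neighborSet w).ncard = 1 := by
  classical
  set P : Set ℕ := {m | ∃ w, ∃ p : G.Walk w0 w, p.IsPath ∧ p.length = m} with hP
  have hne : P.Nonempty := ⟨0, w0, Walk.nil, Walk.IsPath.nil, rfl⟩
  have hbdd : BddAbove P := by
    refine ⟨Fintype.card V, ?_⟩
    rintro m ⟨w, p, hp, rfl⟩
    exact le_of_lt hp.length_lt
  obtain ⟨w, p, hp, hlen⟩ := Nat.sSup_mem hne hbdd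
  have hreach : G.Reachable w0 w := ⟨p⟩
  -- it suffices to find a usable neighbor off the path to derive a contradiction
  have extend : ∀ x, G.Adj w x → x ∉ p.support → False := by
    intro x hadj hxs
    have hp' : (p.concat hadj).IsPath := concat_isPath' p hp hadj hxs
    have : p.length + 1 ∈ P := ⟨x, p.concat hadj, hp', by rw [Walk.length_concat]⟩
    have h2 := le_csSup hbdd this
    omega
  by_cases hleaf : (T.neighborSet w).ncard = 1
  · exact ⟨w, hreach, hleaf⟩
  -- otherwise get two G-neighbors or handle the trivial path
  by_cases hw : w = w0
  · subst hw
    have hnil : p = Walk.nil := isPath_loop_eq_nil p hp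
    rcases H0 with h1 | h1
    · obtain ⟨x, hx⟩ := Set.nonempty_of_ncard_ne_zero (s := G.neighborSet w) (by omega)
      refine absurd (extend x hx ?_) not_false
      rw [hnil]
      simp only [Walk.support_nil, List.mem_singleton]
      exact fun h => G.irrefl (h ▸ hx)
    · exact absurd h1 hleaf
  rcases H1 w hreach hw with h2 | h1
  · -- two neighbors, at most one on the path
    have huniq : ∀ x1 ∈ G.neighborSet w, ∀ x2 ∈ G.neighborSet w,
        x1 ∈ p.support → x2 ∈ p.support → x1 = x2 := by
      intro x1 hx1 x2 hx2 hs1 hs2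
      have pT : T.Walk w0 w := p.mapLe hG
      have hpT : (p.mapLe hG).IsPath := hp.mapLe hG
      have hsupp : (p.mapLe hG).support = p.support := by
        rw [Walk.mapLe, Walk.support_map, show ⇑(Hom.ofLE hG) = id from rfl,
          List.map_id]
      have e1 : s(x1, w) ∈ (p.mapLe hG).edges :=
        adj_support_mem_edges hT _ hpT (by rw [hsupp]; exact hs1) (hG hx1)
      have e2 : s(x2, w) ∈ (p.mapLe hG).edges :=
        adj_support_mem_edges hT _ hpT (by rw [hsupp]; exact hs2) (hG hx2)
      exact edge_end_unique _ hpT x1 x2 e1 e2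
    obtain ⟨x1, x2, hx1, hx2, hne12⟩ := (Set.one_lt_ncard_iff (s := G.neighborSet w) (Set.toFinite _)).mp (by omega)
    by_cases hs1 : x1 ∈ p.support
    · by_cases hs2 : x2 ∈ p.support
      · exact absurd (huniq x1 hx1 x2 hx2 hs1 hs2) hne12
      · exact absurd (extend x2 hx2 hs2) not_false
    · exact absurd (extend x1 hx1 hs1) not_false
  · exact absurd h1 hleaf

end MaxPath


section PS
variable {n : ℕ}

lemma exists_ext (T : PhyloTree n) (f : Fin n → Bool) :
    ∃ g : Fin (2*n-2) → Bool, ∀ i, g (T.leaf i) = f i := by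
  refine ⟨fun v => if h : ∃ i, T.leaf i = v then f h.choose else false, fun i => ?_⟩
  have h : ∃ j, T.leaf j = T.leaf i := ⟨i, rfl⟩
  simp only [dif_pos h]
  exact congrArg f (T.leaf_inj h.choose_spec)

lemma psSet_nonempty (T : PhyloTree n) (f : Fin n → Bool) :
    {m | ∃ g : Fin (2 * n - 2) → Bool,
      (∀ i, g (T.leaf i) = f i) ∧ changingNumber T g = m}.Nonempty := by
  obtain ⟨g, hg⟩ := exists_ext T f
  exact ⟨changingNumber T g, g, hg, rfl⟩

lemma ps_le (T : PhyloTree n) (f : Fin n → Bool) {g : Fin (2 * n - 2) → Bool}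
    (hg : ∀ i, g (T.leaf i) = f i) : ps f T ≤ changingNumber T g :=
  Nat.sInf_le ⟨g, hg, rfl⟩

lemma ps_spec (T : PhyloTree n) (f : Fin n → Bool) :
    ∃ g : Fin (2 * n - 2) → Bool,
      (∀ i, g (T.leaf i) = f i) ∧ changingNumber T g = ps f T :=
  Nat.sInf_mem (psSet_nonempty T f)

lemma changingNumber_eq_zero {T : PhyloTree n} {g : Fin (2 * n - 2) → Bool}
    (h : ∀ u v, T.adj.Adj u v → g u = g v) : changingNumber T g = 0 := by
  rw [changingNumber, Set.ncard_eq_zero (Set.toFinite _)]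
  ext e
  simp only [Set.mem_setOf_eq, Set.mem_empty_iff_false, iff_false, not_and]
  rintro he ⟨u, v, rfl, hne⟩
  exact hne (h u v (by rwa [← SimpleGraph.mem_edgeSet]))

lemma adj_const_of_changingNumber_zero {T : PhyloTree n} {g : Fin (2 * n - 2) → Bool}
    (h : changingNumber T g = 0) : ∀ u v, T.adj.Adj u v → g u = g v := by
  intro u v hadj
  by_contra hne
  have : s(u,v) ∈ {e : Sym2 (Fin (2 * n - 2)) |
      e ∈ T.adj.edgeSet ∧ ∃ u v, e = s(u, v) ∧ g u ≠ g v} := ⟨hadj, u, v, rfl, hne⟩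
  rw [changingNumber, Set.ncard_eq_zero (Set.toFinite _)] at h
  rw [h] at this
  exact this

lemma ps_eq_zero_of_const (T : PhyloTree n) {f : Fin n → Bool}
    (h : ∀ i j, f i = f j) : ps f T = 0 := by
  by_cases hne : Nonempty (Fin n)
  · obtain ⟨i0⟩ := hne
    have h1 : ps f T ≤ changingNumber T (fun _ => f i0) :=
      ps_le T f (fun i => h i0 i)
    have h2 : changingNumber T (fun _ => f i0) = 0 :=
      changingNumber_eq_zero (fun _ _ _ => rfl)
    omega
  · have h1 : ps f T ≤ changingNumber T (fun _ => false) :=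
      ps_le T f (fun i => absurd ⟨i⟩ hne)
    have h2 : changingNumber T (fun _ => false) = 0 :=
      changingNumber_eq_zero (fun _ _ _ => rfl)
    omega

lemma one_le_ps {T : PhyloTree n} {f : Fin n → Bool}
    (h : ∃ i j, f i ≠ f j) : 1 ≤ ps f T := by
  rw [Nat.one_le_iff_ne_zero]
  intro h0
  obtain ⟨g, hg, hcn⟩ := ps_spec T f
  rw [h0] at hcn
  obtain ⟨i, j, hij⟩ := h
  have := const_of_adj_const (adj_const_of_changingNumber_zero hcn)
    (T.connected.preconnected (T.leaf i) (T.leaf j))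
  rw [hg i, hg j] at this
  exact hij this

lemma tree_bridge (T : PhyloTree n) {u v : Fin (2 * n - 2)}
    (h : s(u,v) ∈ T.adj.edgeSet) :
    ¬ (T.adj.deleteEdges {s(u,v)}).Reachable u v := by
  have hb := isAcyclic_iff_forall_edge_isBridge.mp T.acyclic h
  rw [isBridge_iff] at hb
  exact hb

lemma reach_or_aux (T : PhyloTree n) {u v w t : Fin (2 * n - 2)}
    (p : T.adj.Walk w t) :
    (T.adj.deleteEdges {s(u,v)}).Reachable w t ∨
      (T.adj.deleteEdges {s(u,v)}).Reachable w u ∨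
      (T.adj.deleteEdges {s(u,v)}).Reachable w v := by
  induction p with
  | nil => exact Or.inl (Reachable.refl _)
  | @cons a b c hadj q ih =>
    by_cases he : s(a, b) = s(u, v)
    · rcases Sym2.eq_iff.mp he with ⟨rfl, rfl⟩ | ⟨rfl, rfl⟩
      · exact Or.inr (Or.inl (Reachable.refl _))
      · exact Or.inr (Or.inr (Reachable.refl _))
    · have hab : (T.adj.deleteEdges {s(u,v)}).Reachable a b :=
        ⟨Walk.cons (SimpleGraph.deleteEdges_adj.mpr ⟨hadj, by simpa using he⟩) Walk.nil⟩
      rcases ih with h1 | h1 | h1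
      · exact Or.inl (hab.trans h1)
      · exact Or.inr (Or.inl (hab.trans h1))
      · exact Or.inr (Or.inr (hab.trans h1))

lemma reach_or (T : PhyloTree n) {u v : Fin (2 * n - 2)} (w : Fin (2 * n - 2)) :
    (T.adj.deleteEdges {s(u,v)}).Reachable w u ∨
      (T.adj.deleteEdges {s(u,v)}).Reachable w v := by
  obtain ⟨p⟩ := T.connected.preconnected w u
  rcases reach_or_aux T (u := u) (v := v) p with h | h | h
  · exact Or.inl h
  · exact Or.inl h
  · exact Or.inr h

lemma not_reach_both (T : PhyloTree n) {u v w : Fin (2 * n - 2)}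
    (h : s(u,v) ∈ T.adj.edgeSet)
    (h1 : (T.adj.deleteEdges {s(u,v)}).Reachable w u)
    (h2 : (T.adj.deleteEdges {s(u,v)}).Reachable w v) : False :=
  tree_bridge T h (h1.symm.trans h2)

lemma del_nbrs_of_ne {T : PhyloTree n} {u v w : Fin (2 * n - 2)}
    (hu : w ≠ u) (hv : w ≠ v) :
    (T.adj.deleteEdges {s(u,v)}).neighborSet w = T.adj.neighborSet w := by
  ext x
  simp only [mem_neighborSet, deleteEdges_adj, Set.mem_singleton_iff, and_iff_left_iff_imp]
  intro _ he
  rcases Sym2.eq_iff.mp he with ⟨rfl, rfl⟩ | ⟨rfl, rfl⟩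
  · exact hu rfl
  · exact hv rfl

lemma del_nbrs_end {T : PhyloTree n} {u v : Fin (2 * n - 2)} :
    (T.adj.deleteEdges {s(u,v)}).neighborSet u = T.adj.neighborSet u \ {v} := by
  ext x
  simp only [mem_neighborSet, deleteEdges_adj, Set.mem_singleton_iff, Set.mem_diff]
  constructor
  · rintro ⟨ha, he⟩
    exact ⟨ha, fun hx => he (by rw [hx])⟩
  · rintro ⟨ha, hx⟩
    refine ⟨ha, fun he => hx ?_⟩
    rcases Sym2.eq_iff.mp he with ⟨-, rfl⟩ | ⟨rfl, rfl⟩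
    · rfl
    · exact (T.adj.irrefl ha).elim

/-- Each side of an edge of a phylogenetic tree contains a leaf. -/
lemma exists_leaf_side (T : PhyloTree n) {u v : Fin (2 * n - 2)}
    (h : s(u,v) ∈ T.adj.edgeSet) :
    ∃ i, (T.adj.deleteEdges {s(u,v)}).Reachable (T.leaf i) u := by
  have hdel : T.adj.deleteEdges {s(u,v)} ≤ T.adj := deleteEdges_le _
  have huv : u ≠ v := (T.adj.ne_of_adj (by rwa [← SimpleGraph.mem_edgeSet]))
  have H1 : ∀ w, (T.adj.deleteEdges {s(u,v)}).Reachable u w → w ≠ u →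
      2 ≤ ((T.adj.deleteEdges {s(u,v)}).neighborSet w).ncard ∨
        (T.adj.neighborSet w).ncard = 1 := by
    intro w hwr hwu
    rcases T.degOneOrThree w with h1 | h3
    · exact Or.inr h1
    · have hwv : w ≠ v := by
        rintro rfl
        exact tree_bridge T h hwr
      left
      rw [del_nbrs_of_ne hwu hwv, h3]
      omega
  have H0 : 1 ≤ ((T.adj.deleteEdges {s(u,v)}).neighborSet u).ncard ∨
      (T.adj.neighborSet u).ncard = 1 := by
    rcases T.degOneOrThree u with h1 | h3
    · exact Or.inr h1
    · left
      rw [del_nbrs_end]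
      have := Set.pred_ncard_le_ncard_diff_singleton (T.adj.neighborSet u) v
      omega
  obtain ⟨w, hw, hdeg⟩ := exists_deg_one_reachable T.acyclic hdel u H1 H0
  obtain ⟨i, hi⟩ := (T.leaf_range w).mp hdeg
  exact ⟨i, hi ▸ hw.symm⟩

end PS


section Splits
variable {n : ℕ}

lemma exists_leaf_side' (T : PhyloTree n) {u v : Fin (2 * n - 2)}
    (h : s(u,v) ∈ T.adj.edgeSet) :
    ∃ i, (T.adj.deleteEdges {s(u,v)}).Reachable (T.leaf i) v := by
  have h' : s(v,u) ∈ T.adj.edgeSet := by rwa [Sym2.eq_swap]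
  obtain ⟨i, hi⟩ := exists_leaf_side T h'
  rw [Sym2.eq_swap] at hi
  exact ⟨i, hi⟩

lemma side_ne (T : PhyloTree n) {u v : Fin (2 * n - 2)}
    (h : s(u,v) ∈ T.adj.edgeSet) :
    {i | (T.adj.deleteEdges {s(u,v)}).Reachable (T.leaf i) u} ≠
      {i | (T.adj.deleteEdges {s(u,v)}).Reachable (T.leaf i) v} := by
  intro he
  obtain ⟨j, hj⟩ := exists_leaf_side' T h
  have : j ∈ {i | (T.adj.deleteEdges {s(u,v)}).Reachable (T.leaf i) v} := hj
  rw [← he] at this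
  exact not_reach_both T h this hj

lemma pair_cases {T : PhyloTree n} {f : Fin n → Bool} {u v : Fin (2 * n - 2)}
    (hedge : s(u,v) ∈ T.adj.edgeSet)
    (hpair : ({ {i | f i = false}, {i | f i = true} } : Set (Set (Fin n))) =
      { {i | (T.adj.deleteEdges {s(u,v)}).Reachable (T.leaf i) u},
        {i | (T.adj.deleteEdges {s(u,v)}).Reachable (T.leaf i) v} }) :
    ∃ b : Bool,
      {i | (T.adj.deleteEdges {s(u,v)}).Reachable (T.leaf i) u} = {i | f i = b} ∧
      {i | (T.adj.deleteEdges {s(u,v)}).Reachable (T.leaf i) v} = {i | f i = !b} := by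
  set Au := {i | (T.adj.deleteEdges {s(u,v)}).Reachable (T.leaf i) u} with hAu
  set Av := {i | (T.adj.deleteEdges {s(u,v)}).Reachable (T.leaf i) v} with hAv
  have hne : Au ≠ Av := side_ne T hedge
  have hFf : ({i | f i = false} : Set (Fin n)) ∈ ({Au, Av} : Set (Set (Fin n))) := by
    rw [← hpair]; exact Set.mem_insert _ _
  have hAumem : Au ∈ ({ {i | f i = false}, {i | f i = true} } : Set (Set (Fin n))) := by
    rw [hpair]; exact Set.mem_insert _ _
  have hAvmem : Av ∈ ({ {i | f i = false}, {i | f i = true} } : Set (Set (Fin n))) := by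
    rw [hpair]; exact Set.mem_insert_of_mem _ rfl
  rcases hAumem with h1 | h1 <;> rcases hAvmem with h2 | h2
  · exact absurd (h1.trans h2.symm) hne
  · exact ⟨false, h1, by rw [h2]; simp⟩
  · exact ⟨true, h1, by rw [h2]; simp⟩
  · exact absurd (h1.trans h2.symm) hne

lemma ps_eq_one_of_split {T : PhyloTree n} {f : Fin n → Bool}
    (hf : ∃ i j, f i ≠ f j)
    (hsp : ({ {i | f i = false}, {i | f i = true} } : Set (Set (Fin n))) ∈ splits T) :
    ps f T = 1 := by
  obtain ⟨u, v, hedge, hpair⟩ := hsp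
  obtain ⟨b, hAu, hAv⟩ := pair_cases hedge hpair
  set g : Fin (2 * n - 2) → Bool :=
    fun a => if (T.adj.deleteEdges {s(u,v)}).Reachable a u then b else !b with hg
  have hext : ∀ i, g (T.leaf i) = f i := by
    intro i
    by_cases hr : (T.adj.deleteEdges {s(u,v)}).Reachable (T.leaf i) u
    · have : f i = b := by
        have : T.leaf i ∈ {a | (T.adj.deleteEdges {s(u,v)}).Reachable a u} := hr
        have hi : i ∈ {i | (T.adj.deleteEdges {s(u,v)}).Reachable (T.leaf i) u} := hr
        rw [hAu] at hi
        exact hi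
      simp [hg, hr, this]
    · have hrv : (T.adj.deleteEdges {s(u,v)}).Reachable (T.leaf i) v :=
        (reach_or T (T.leaf i)).resolve_left hr
      have : f i = !b := by
        have hi : i ∈ {i | (T.adj.deleteEdges {s(u,v)}).Reachable (T.leaf i) v} := hrv
        rw [hAv] at hi
        exact hi
      simp [hg, hr, this]
  have hgu : g u = b := by
    simp only [hg]
    rw [if_pos (Reachable.refl u)]
  have hgv : g v = !b := by
    have : ¬ (T.adj.deleteEdges {s(u,v)}).Reachable v u :=
      fun hr => tree_bridge T hedge hr.symm
    simp [hg, this]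
  have hCS : {e : Sym2 (Fin (2 * n - 2)) |
      e ∈ T.adj.edgeSet ∧ ∃ a c, e = s(a, c) ∧ g a ≠ g c} = {s(u,v)} := by
    ext e
    simp only [Set.mem_setOf_eq, Set.mem_singleton_iff]
    constructor
    · rintro ⟨he, a, c, rfl, hne⟩
      have hadj : T.adj.Adj a c := by rwa [← SimpleGraph.mem_edgeSet]
      by_contra heq
      have hdadj : (T.adj.deleteEdges {s(u,v)}).Adj a c :=
        SimpleGraph.deleteEdges_adj.mpr ⟨hadj, by simpa using heq⟩
      have hrac : (T.adj.deleteEdges {s(u,v)}).Reachable a c := ⟨Walk.cons hdadj Walk.nil⟩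
      by_cases hra : (T.adj.deleteEdges {s(u,v)}).Reachable a u
      · by_cases hrc : (T.adj.deleteEdges {s(u,v)}).Reachable c u
        · simp [hg, hra, hrc] at hne
        · exact hrc (hrac.symm.trans hra)
      · by_cases hrc : (T.adj.deleteEdges {s(u,v)}).Reachable c u
        · exact hra (hrac.trans hrc)
        · simp [hg, hra, hrc] at hne
    · rintro rfl
      refine ⟨hedge, u, v, rfl, ?_⟩
      rw [hgu, hgv]
      cases b <;> simp
  have h1 : ps f T ≤ 1 := by
    have := ps_le T f hext
    rwa [changingNumber, hCS, Set.ncard_singleton] at this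
  have h2 := one_le_ps (T := T) hf
  omega

lemma split_of_ps_eq_one {T : PhyloTree n} {f : Fin n → Bool}
    (h1 : ps f T = 1) :
    ({ {i | f i = false}, {i | f i = true} } : Set (Set (Fin n))) ∈ splits T := by
  obtain ⟨g, hg, hcn⟩ := ps_spec T f
  rw [h1] at hcn
  rw [changingNumber] at hcn
  obtain ⟨e0, he0⟩ := Set.ncard_eq_one.mp hcn
  have he0mem : e0 ∈ {e : Sym2 (Fin (2 * n - 2)) |
      e ∈ T.adj.edgeSet ∧ ∃ u v, e = s(u, v) ∧ g u ≠ g v} := by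
    rw [he0]; rfl
  obtain ⟨hedge, u, v, rfl, hne⟩ := he0mem
  have hconst : ∀ a c, (T.adj.deleteEdges {s(u,v)}).Adj a c → g a = g c := by
    intro a c hadj
    rw [SimpleGraph.deleteEdges_adj] at hadj
    by_contra hgne
    have : s(a,c) ∈ {e : Sym2 (Fin (2 * n - 2)) |
        e ∈ T.adj.edgeSet ∧ ∃ u v, e = s(u, v) ∧ g u ≠ g v} :=
      ⟨hadj.1, a, c, rfl, hgne⟩
    rw [he0] at this
    exact hadj.2 (by simpa using this)
  have hAu : {i | (T.adj.deleteEdges {s(u,v)}).Reachable (T.leaf i) u}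
      = {i | f i = g u} := by
    ext i
    simp only [Set.mem_setOf_eq]
    constructor
    · intro hr
      rw [← hg i]
      exact const_of_adj_const hconst hr
    · intro hfi
      rcases reach_or T (u := u) (v := v) (T.leaf i) with hr | hr
      · exact hr
      · exfalso
        have := const_of_adj_const hconst hr
        rw [hg i, hfi] at this
        exact hne this
  have hAv : {i | (T.adj.deleteEdges {s(u,v)}).Reachable (T.leaf i) v}
      = {i | f i = g v} := by
    ext i
    simp only [Set.mem_setOf_eq]
    constructor
    · intro hr
      rw [← hg i]
      exact const_of_adj_const hconst hr
    · intro hfi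
      rcases reach_or T (u := u) (v := v) (T.leaf i) with hr | hr
      · exfalso
        have := const_of_adj_const hconst hr
        rw [hg i, hfi] at this
        exact hne this.symm
      · exact hr
  refine ⟨u, v, hedge, ?_⟩
  rw [hAu, hAv]
  cases hgu : g u
  · rw [hgu] at hne
    have hgv : g v = true := by
      cases hgv : g v
      · rw [hgv] at hne; exact absurd rfl hne
      · rfl
    rw [hgv]
  · rw [hgu] at hne
    have hgv : g v = false := by
      cases hgv : g v
      · rfl
      · rw [hgv] at hne; exact absurd rfl hne
    rw [hgv, Set.pair_comm]

end Splits


section Caterpillar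

/-- parent function of the caterpillar tree -/
def pnat (n a : ℕ) : ℕ :=
  if a < n - 2 then a - 1
  else if a = n - 2 then 0
  else if a = 2 * n - 3 then n - 3
  else a - (n - 1)

lemma pnat_le_self (n a : ℕ) : pnat n a ≤ a := by
  unfold pnat; split_ifs <;> omega

lemma pnat_lt_self {n a : ℕ} (hn : 3 ≤ n) (ha : a ≠ 0) : pnat n a < a := by
  unfold pnat; split_ifs <;> omega

lemma pnat_le (n a : ℕ) (hn : 3 ≤ n) (ha : a < 2 * n - 2) : pnat n a ≤ n - 3 := by
  unfold pnat; split_ifs <;> omega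

/-- The caterpillar graph on `Fin (2*n-2)`. -/
def catGraph (n : ℕ) : SimpleGraph (Fin (2 * n - 2)) where
  Adj a b := a ≠ b ∧ (pnat n a.val = b.val ∨ pnat n b.val = a.val)
  symm := ⟨by
    rintro a b ⟨h1, h2⟩
    exact ⟨h1.symm, h2.symm⟩⟩
  loopless := ⟨by rintro a ⟨h1, -⟩; exact h1 rfl⟩

lemma catGraph_adj {n : ℕ} {a b : Fin (2 * n - 2)} :
    (catGraph n).Adj a b ↔ a ≠ b ∧ (pnat n a.val = b.val ∨ pnat n b.val = a.val) :=
  Iff.rfl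

lemma cat_connected {n : ℕ} (hn : 3 ≤ n) : (catGraph n).Connected := by
  have h0 : (0 : ℕ) < 2 * n - 2 := by omega
  have key : ∀ m : ℕ, ∀ a : Fin (2 * n - 2), a.val = m →
      (catGraph n).Reachable a ⟨0, h0⟩ := by
    intro m
    induction m using Nat.strong_induction_on with
    | _ m ih =>
      intro a ha
      by_cases hz : a.val = 0
      · have : a = ⟨0, h0⟩ := Fin.ext hz
        rw [this]
      · have hplt : pnat n a.val < a.val := pnat_lt_self hn hz
        have hlt : pnat n a.val < 2 * n - 2 := lt_trans hplt a.isLt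
        have hadj : (catGraph n).Adj a ⟨pnat n a.val, hlt⟩ := by
          refine ⟨?_, Or.inl rfl⟩
          intro h
          have := congrArg Fin.val h
          simp at this
          omega
        exact (hadj.reachable).trans (ih (pnat n a.val) (ha ▸ hplt) _ rfl)
  haveI : Nonempty (Fin (2 * n - 2)) := ⟨⟨0, h0⟩⟩
  exact SimpleGraph.Connected.mk (fun a b => (key a.val a rfl).trans (key b.val b rfl).symm)

lemma cat_acyclic {n : ℕ} (hn : 3 ≤ n) : (catGraph n).IsAcyclic := by
  rw [isAcyclic_iff_forall_adj_isBridge]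
  -- it suffices to consider edges of the form (a, parent a)
  suffices H : ∀ a b : Fin (2 * n - 2), (catGraph n).Adj a b → pnat n a.val = b.val →
      (catGraph n).IsBridge s(a, b) by
    intro a b hadj
    rcases hadj.2 with h | h
    · exact H a b hadj h
    · rw [Sym2.eq_swap]; exact H b a hadj.symm h
  intro a b hadj hpar
  rw [isBridge_iff]
  rintro ⟨p⟩
  -- everything reachable from `a` without the edge is a descendant of `a`
  have ha0 : a.val ≠ 0 := by
    intro h
    apply hadj.1
    apply Fin.ext
    rw [← hpar, h]
    unfold pnat
    split_ifs <;> omega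
  have desc : ∀ {x y : Fin (2 * n - 2)}
      (q : (catGraph n \ fromEdgeSet {s(a, b)}).Walk x y),
      (∃ k, (pnat n)^[k] x.val = a.val) → (∃ k, (pnat n)^[k] y.val = a.val) := by
    intro x y q
    induction q with
    | nil => exact id
    | @cons c d e hcd q ih =>
      intro hc
      apply ih
      obtain ⟨hcd', hne⟩ := hcd
      rw [fromEdgeSet_adj] at hne
      push_neg at hne
      have hne' : s(c, d) ≠ s(a, b) := fun h => hcd'.ne (hne (Set.mem_singleton_iff.mpr h))
      rcases hcd'.2 with h | h
      · -- d is the parent of c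
        obtain ⟨k, hk⟩ := hc
        rcases Nat.eq_zero_or_pos k with rfl | hkpos
        · -- c = a, so d = parent a = b : excluded edge
          simp only [Function.iterate_zero, id_eq] at hk
          exfalso
          apply hne'
          have hca : c = a := Fin.ext hk
          have hdb : d = b := Fin.ext (by rw [← h, hk, hpar])
          rw [hca, hdb]
        · obtain ⟨k', rfl⟩ := Nat.exists_eq_succ_of_ne_zero (by omega : k ≠ 0)
          refine ⟨k', ?_⟩
          rw [Function.iterate_succ_apply] at hk
          rwa [← h]
      · exact ⟨_ + 1, by rw [Function.iterate_succ_apply, h]; exact hc.choose_spec⟩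
  have hb : ∃ k, (pnat n)^[k] b.val = a.val := desc p ⟨0, rfl⟩
  -- but all iterates of pnat from b stay below a
  obtain ⟨k, hk⟩ := hb
  have hlt : ∀ k, (pnat n)^[k] b.val < a.val := by
    intro k
    induction k with
    | zero =>
      simp only [Function.iterate_zero, id_eq]
      rw [← hpar]
      exact pnat_lt_self hn ha0
    | succ k ih =>
      rw [Function.iterate_succ_apply']
      exact lt_of_le_of_lt (pnat_le_self n _) ih
  have := hlt k
  omega

lemma cat_nbrs_big {n : ℕ} (hn : 3 ≤ n) (a : Fin (2 * n - 2)) (ha : n - 2 ≤ a.val) :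
    (catGraph n).neighborSet a =
      {⟨pnat n a.val, lt_of_le_of_lt (pnat_le_self n _) a.isLt⟩} := by
  have hplt : pnat n a.val < a.val := pnat_lt_self hn (by omega)
  ext b
  simp only [mem_neighborSet, catGraph_adj, Set.mem_singleton_iff]
  constructor
  · rintro ⟨hne, h | h⟩
    · exact Fin.ext h.symm
    · exfalso
      have := pnat_le n b.val hn b.isLt
      omega
  · rintro rfl
    refine ⟨?_, Or.inl rfl⟩
    intro h
    have := congrArg Fin.val h
    simp at this
    omega

lemma cat_nbrs_small {n : ℕ} (hn : 3 ≤ n) (a : Fin (2 * n - 2)) (ha : a.val ≤ n - 3) :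
    ((catGraph n).neighborSet a).ncard = 3 := by
  have himg : Fin.val '' ((catGraph n).neighborSet a) =
      {m : ℕ | m < 2 * n - 2 ∧ m ≠ a.val ∧ (pnat n a.val = m ∨ pnat n m = a.val)} := by
    ext m
    simp only [Set.mem_image, mem_neighborSet, catGraph_adj, Set.mem_setOf_eq]
    constructor
    · rintro ⟨b, ⟨hne, hor⟩, rfl⟩
      exact ⟨b.isLt, fun h => hne (Fin.ext h.symm), hor⟩
    · rintro ⟨hm, hne, hor⟩
      exact ⟨⟨m, hm⟩, ⟨fun h => hne (congrArg Fin.val h).symm, hor⟩, rfl⟩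
  rw [← Set.ncard_image_of_injective _ Fin.val_injective, himg]
  have hav := a.isLt
  by_cases h0 : a.val = 0
  · by_cases h3 : n = 3
    · refine Set.ncard_eq_three.mpr ⟨1, 2, 3, by omega, by omega, by omega, ?_⟩
      ext m
      simp only [Set.mem_setOf_eq, Set.mem_insert_iff, Set.mem_singleton_iff]
      unfold pnat
      split_ifs <;> omega
    · refine Set.ncard_eq_three.mpr ⟨1, n - 2, n - 1, by omega, by omega, by omega, ?_⟩
      ext m
      simp only [Set.mem_setOf_eq, Set.mem_insert_iff, Set.mem_singleton_iff]
      unfold pnat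
      split_ifs <;> omega
  · by_cases hlast : a.val = n - 3
    · refine Set.ncard_eq_three.mpr ⟨a.val - 1, 2 * n - 4, 2 * n - 3,
        by omega, by omega, by omega, ?_⟩
      ext m
      simp only [Set.mem_setOf_eq, Set.mem_insert_iff, Set.mem_singleton_iff]
      unfold pnat
      split_ifs <;> omega
    · refine Set.ncard_eq_three.mpr ⟨a.val - 1, a.val + 1, a.val + n - 1,
        by omega, by omega, by omega, ?_⟩
      ext m
      simp only [Set.mem_setOf_eq, Set.mem_insert_iff, Set.mem_singleton_iff]
      unfold pnat
      split_ifs <;> omega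

/-- The caterpillar tree with leaves permuted by `σ`. -/
noncomputable def catTree {n : ℕ} (hn : 3 ≤ n) (σ : Equiv.Perm (Fin n)) : PhyloTree n where
  adj := catGraph n
  connected := cat_connected hn
  acyclic := cat_acyclic hn
  degOneOrThree := by
    intro v
    by_cases hv : v.val ≤ n - 3
    · exact Or.inr (cat_nbrs_small hn v hv)
    · left
      rw [cat_nbrs_big hn v (by omega)]
      exact Set.ncard_singleton _
  leaf := fun i => ⟨n - 2 + (σ i).val, by have := (σ i).isLt; omega⟩
  leaf_inj := by
    intro i j h
    have h' : n - 2 + (σ i).val = n - 2 + (σ j).val := congrArg Fin.val h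
    exact σ.injective (Fin.ext (by omega))
  leaf_range := by
    intro v
    constructor
    · intro h1
      by_cases hv : v.val ≤ n - 3
      · rw [cat_nbrs_small hn v hv] at h1
        omega
      · refine ⟨σ.symm ⟨v.val - (n - 2), by omega⟩, Fin.ext ?_⟩
        simp only [Equiv.apply_symm_apply]
        omega
    · rintro ⟨i, rfl⟩
      rw [cat_nbrs_big hn _ (by simp)]
      exact Set.ncard_singleton _

end Caterpillar


section Sorting

lemma exists_sorting_perm {n : ℕ} (hn : 3 ≤ n) {f : Fin n → Bool} (hf : ∃ i j, f i ≠ f j) :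
    ∃ (k : ℕ) (σ : Equiv.Perm (Fin n)), 1 ≤ k ∧ k ≤ n - 1 ∧
      ∀ i, (f i = true ↔ n - k ≤ (σ i).val) := by
  classical
  set k := (Finset.univ.filter (fun i => f i = true)).card with hk
  have hkn : k ≤ n := le_trans (Finset.card_filter_le _ _) (by simp)
  obtain ⟨i, j, hij⟩ := hf
  have htrue : ∃ i0, f i0 = true := by
    cases hfi : f i
    · cases hfj : f j
      · rw [hfi, hfj] at hij; exact absurd rfl hij
      · exact ⟨j, hfj⟩
    · exact ⟨i, hfi⟩
  have hfalse : ∃ j0, f j0 = false := by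
    cases hfi : f i
    · exact ⟨i, hfi⟩
    · cases hfj : f j
      · exact ⟨j, hfj⟩
      · rw [hfi, hfj] at hij; exact absurd rfl hij
  have h1k : 1 ≤ k := by
    obtain ⟨i0, hi0⟩ := htrue
    exact Finset.card_pos.mpr ⟨i0, by simp [hi0]⟩
  have hkn1 : k ≤ n - 1 := by
    obtain ⟨j0, hj0⟩ := hfalse
    have hsum := Finset.card_filter_add_card_filter_not
      (s := (Finset.univ : Finset (Fin n))) (p := fun i => f i = true)
    have hpos : 0 < (Finset.univ.filter (fun i => ¬ f i = true)).card :=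
      Finset.card_pos.mpr ⟨j0, by simp [hj0]⟩
    simp only [Finset.card_univ, Fintype.card_fin] at hsum
    omega
  have cardT : Fintype.card {x : Fin n // f x = true} = k := by
    rw [Fintype.card_subtype]
  have e0 : Fin k ≃ {m : Fin n // n - k ≤ m.val} :=
    { toFun := fun j => ⟨⟨n - k + j.val, by have := j.isLt; omega⟩, by
        simp only [Set.mem_setOf_eq]; omega⟩
      invFun := fun s => ⟨s.val.val - (n - k), by
        have h1 := s.prop
        have h2 := s.val.isLt
        omega⟩
      left_inv := fun j => by
        apply Fin.ext
        simp only
        omega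
      right_inv := fun s => by
        apply Subtype.ext
        apply Fin.ext
        have h1 := s.prop
        simp only
        omega }
  have cardB : Fintype.card {m : Fin n // n - k ≤ m.val} = k := by
    rw [← Fintype.card_congr e0, Fintype.card_fin]
  have ep : {x : Fin n // f x = true} ≃ {m : Fin n // n - k ≤ m.val} :=
    Fintype.equivOfCardEq (cardT.trans cardB.symm)
  have en : {x : Fin n // ¬ f x = true} ≃ {m : Fin n // ¬ n - k ≤ m.val} :=
    Fintype.equivOfCardEq (by
      rw [Fintype.card_subtype_compl, Fintype.card_subtype_compl, cardT, cardB])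
  refine ⟨k, Equiv.subtypeCongr ep en, h1k, hkn1, ?_⟩
  intro i0
  by_cases hfi : f i0 = true
  · have : Equiv.subtypeCongr ep en i0 = (ep ⟨i0, hfi⟩).val := by
      simp [Equiv.subtypeCongr, hfi]
    rw [this]
    simp only [hfi, true_iff]
    exact (ep ⟨i0, hfi⟩).prop
  · have : Equiv.subtypeCongr ep en i0 = (en ⟨i0, hfi⟩).val := by
      simp [Equiv.subtypeCongr, hfi]
    rw [this]
    constructor
    · intro h; exact absurd h hfi
    · intro h; exact absurd h (en ⟨i0, hfi⟩).prop

lemma exists_tree_ps_le_one {n : ℕ} (hn : 3 ≤ n) {f : Fin n → Bool}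
    (hf : ∃ i j, f i ≠ f j) : ∃ T0 : PhyloTree n, ps f T0 ≤ 1 := by
  classical
  obtain ⟨k, σ, hk1, hkn, hσ⟩ := exists_sorting_perm hn hf
  refine ⟨catTree hn σ, ?_⟩
  set c : ℕ := if k ≤ n - 2 then (if 2 ≤ k then n - 1 - k else 2 * n - 3) else n - 2 with hc
  set gP : ℕ → Prop := fun a =>
    if k ≤ n - 2 then (n + (n - 2 - k) ≤ a ∨ (n - 2 - k + 1 ≤ a ∧ a ≤ n - 3))
    else a ≠ n - 2 with hgP
  set g : Fin (2 * n - 2) → Bool := fun a => if gP a.val then true else false with hgdef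
  have gspec : ∀ a : Fin (2 * n - 2), g a = true ↔ gP a.val := by
    intro a
    by_cases h : gP a.val <;> simp [hgdef, h]
  have gne : ∀ x y : Fin (2 * n - 2), g x ≠ g y ↔ ¬ (gP x.val ↔ gP y.val) := by
    intro x y
    by_cases h1 : gP x.val <;> by_cases h2 : gP y.val <;> simp [hgdef, h1, h2]
  have hc0 : c ≠ 0 := by rw [hc]; split_ifs <;> omega
  have hclt : c < 2 * n - 2 := by rw [hc]; split_ifs <;> omega
  have hpc : pnat n c < 2 * n - 2 := by
    have := pnat_le_self n c
    omega
  have huniq : ∀ x, x < 2 * n - 2 → (¬ (gP x ↔ gP (pnat n x)) ↔ x = c) := by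
    intro x hx
    simp only [hgP, hc]
    unfold pnat
    split_ifs <;> omega
  have hext : ∀ i, g ((catTree hn σ).leaf i) = f i := by
    intro i
    have hlv : ((catTree hn σ).leaf i).val = n - 2 + (σ i).val := rfl
    have hσi := hσ i
    have hslt := (σ i).isLt
    cases hfi : f i
    · rw [hfi] at hσi
      simp only [Bool.false_eq_true, false_iff, not_le] at hσi
      have : ¬ gP ((catTree hn σ).leaf i).val := by
        rw [hlv]
        simp only [hgP]
        split_ifs <;> omega
      simp [hgdef, this]
    · rw [hfi] at hσi
      have hge : n - k ≤ (σ i).val := hσi.mp rfl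
      have : gP ((catTree hn σ).leaf i).val := by
        rw [hlv]
        simp only [hgP]
        split_ifs <;> omega
      simp [hgdef, this]
  have hCS : {e : Sym2 (Fin (2 * n - 2)) |
      e ∈ (catTree hn σ).adj.edgeSet ∧ ∃ u v, e = s(u, v) ∧ g u ≠ g v} =
      {s((⟨c, hclt⟩ : Fin (2 * n - 2)), (⟨pnat n c, hpc⟩ : Fin (2 * n - 2)))} := by
    ext e
    simp only [Set.mem_setOf_eq, Set.mem_singleton_iff]
    constructor
    · rintro ⟨he, a, b, rfl, hgne⟩
      have hadj : (catGraph n).Adj a b := he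
      obtain ⟨hab, hor⟩ := hadj
      have hgne' : ¬ (gP a.val ↔ gP b.val) := (gne a b).mp hgne
      rcases hor with h | h
      · have hac : a.val = c := by
          rw [← huniq a.val a.isLt]
          rw [h]
          exact hgne'
        have hbc : b.val = pnat n c := by rw [← hac, h]
        have : a = (⟨c, hclt⟩ : Fin (2 * n - 2)) := Fin.ext hac
        have hb : b = (⟨pnat n c, hpc⟩ : Fin (2 * n - 2)) := Fin.ext hbc
        rw [this, hb]
      · have hbc : b.val = c := by
          rw [← huniq b.val b.isLt]
          rw [h]
          exact fun hiff => hgne' hiff.symm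
        have hac : a.val = pnat n c := by rw [← hbc, h]
        have ha : a = (⟨pnat n c, hpc⟩ : Fin (2 * n - 2)) := Fin.ext hac
        have hb : b = (⟨c, hclt⟩ : Fin (2 * n - 2)) := Fin.ext hbc
        rw [ha, hb, Sym2.eq_swap]
    · rintro rfl
      have hplt : pnat n c < c := pnat_lt_self hn hc0
      refine ⟨?_, ⟨c, hclt⟩, ⟨pnat n c, hpc⟩, rfl, ?_⟩
      · show (catGraph n).Adj _ _
        refine ⟨?_, Or.inl rfl⟩
        intro hcon
        have := congrArg Fin.val hcon
        simp only at this
        omega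
      · rw [gne]
        intro hiff
        have := (huniq c hclt).mpr rfl
        exact this hiff
  have h1 : changingNumber (catTree hn σ) g = 1 := by
    rw [changingNumber, hCS, Set.ncard_singleton]
  have := ps_le (catTree hn σ) f hext
  omega

end Sorting


section SplitInj
variable {n : ℕ}

lemma mapLe_edges {V : Type*} {G H : SimpleGraph V} (hle : G ≤ H) {a b : V}
    (p : G.Walk a b) : (p.mapLe hle).edges = p.edges := by
  rw [Walk.mapLe, Walk.edges_map,
    show ⇑(Hom.ofLE hle) = id from rfl, Sym2.map_id, List.map_id]

lemma split_inj_core (T : PhyloTree n) {u v u' v' : Fin (2 * n - 2)}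
    (h : s(u,v) ∈ T.adj.edgeSet) (h' : s(u',v') ∈ T.adj.edgeSet)
    (hne : s(u,v) ≠ s(u',v'))
    (hu'u : (T.adj.deleteEdges {s(u,v)}).Reachable u' u)
    (hv'u : (T.adj.deleteEdges {s(u,v)}).Reachable v' u)
    (huu' : (T.adj.deleteEdges {s(u',v')}).Reachable u u')
    (hvu' : (T.adj.deleteEdges {s(u',v')}).Reachable v u')
    (hpair : ({ {i | (T.adj.deleteEdges {s(u,v)}).Reachable (T.leaf i) u},
                {i | (T.adj.deleteEdges {s(u,v)}).Reachable (T.leaf i) v} } : Set (Set (Fin n))) =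
             { {i | (T.adj.deleteEdges {s(u',v')}).Reachable (T.leaf i) u'},
               {i | (T.adj.deleteEdges {s(u',v')}).Reachable (T.leaf i) v'} }) : False := by
  classical
  have huv : u ≠ v := ((SimpleGraph.mem_edgeSet _).mp h).ne
  have hu'v' : u' ≠ v' := ((SimpleGraph.mem_edgeSet _).mp h').ne
  set D2 := T.adj.deleteEdges {s(u,v), s(u',v')} with hD2
  have mono1 : D2 ≤ T.adj.deleteEdges {s(u,v)} :=
    deleteEdges_anti (by intro x hx; simp only [Set.mem_singleton_iff] at hx; simp [hx])
  have mono2 : D2 ≤ T.adj.deleteEdges {s(u',v')} :=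
    deleteEdges_anti (by intro x hx; simp only [Set.mem_singleton_iff] at hx; simp [hx])
  have huv' : u ≠ v' := by
    rintro rfl
    exact tree_bridge T h' huu'.symm
  -- find a leaf in the middle component
  have H1 : ∀ w, D2.Reachable u w → w ≠ u →
      2 ≤ (D2.neighborSet w).ncard ∨ (T.adj.neighborSet w).ncard = 1 := by
    intro w hw hwu
    rcases T.degOneOrThree w with h1 | h3
    · exact Or.inr h1
    · left
      have hwv : w ≠ v := by
        rintro rfl
        exact tree_bridge T h (hw.mono mono1)
      have hwv' : w ≠ v' := by
        rintro rfl
        exact tree_bridge T h' (huu'.symm.trans (hw.mono mono2))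
      have hsub : T.adj.neighborSet w \ {v'} ⊆ D2.neighborSet w := by
        rintro x ⟨hx, hxv'⟩
        simp only [Set.mem_singleton_iff] at hxv'
        refine SimpleGraph.deleteEdges_adj.mpr ⟨hx, ?_⟩
        intro hmem
        rcases hmem with hm | hm
        · rcases Sym2.eq_iff.mp hm with ⟨h1, h2⟩ | ⟨h1, h2⟩
          · exact hwu h1
          · exact hwv h1
        · simp only [Set.mem_singleton_iff] at hm
          rcases Sym2.eq_iff.mp hm with ⟨h1, h2⟩ | ⟨h1, h2⟩
          · exact hxv' h2
          · exact hwv' h1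
      have hle := Set.ncard_le_ncard hsub (Set.toFinite _)
      have := Set.pred_ncard_le_ncard_diff_singleton (T.adj.neighborSet w) v'
      omega
  have H0 : 1 ≤ (D2.neighborSet u).ncard ∨ (T.adj.neighborSet u).ncard = 1 := by
    rcases T.degOneOrThree u with h1 | h3
    · exact Or.inr h1
    · left
      have hsub : ((T.adj.neighborSet u \ {v}) \ {v'} : Set (Fin (2 * n - 2))) ⊆ D2.neighborSet u := by
        rintro x ⟨⟨hx, hxv⟩, hxv'⟩
        simp only [Set.mem_singleton_iff] at hxv hxv'
        refine SimpleGraph.deleteEdges_adj.mpr ⟨hx, ?_⟩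
        intro hmem
        rcases hmem with hm | hm
        · rcases Sym2.eq_iff.mp hm with ⟨h1, h2⟩ | ⟨h1, h2⟩
          · exact hxv h2
          · exact huv h1
        · simp only [Set.mem_singleton_iff] at hm
          rcases Sym2.eq_iff.mp hm with ⟨h1, h2⟩ | ⟨h1, h2⟩
          · exact hxv' h2
          · exact huv' h1
      have hle := Set.ncard_le_ncard hsub (Set.toFinite _)
      have h4 := Set.pred_ncard_le_ncard_diff_singleton (T.adj.neighborSet u) v
      have h5 := Set.pred_ncard_le_ncard_diff_singleton (T.adj.neighborSet u \ {v}) v'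
      omega
  obtain ⟨w, hw, hdeg⟩ := exists_deg_one_reachable T.acyclic
    (le_trans mono1 (deleteEdges_le _)) u H1 H0
  obtain ⟨l, hl⟩ := (T.leaf_range w).mp hdeg
  have hlAu : (T.adj.deleteEdges {s(u,v)}).Reachable (T.leaf l) u := by
    rw [hl]; exact (hw.mono mono1).symm
  have hlA'u' : (T.adj.deleteEdges {s(u',v')}).Reachable (T.leaf l) u' := by
    rw [hl]; exact (hw.mono mono2).symm.trans huu'
  -- a leaf on the v-side of e
  obtain ⟨lv, hlv⟩ := exists_leaf_side' T h
  -- case analysis on which primed side Av equals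
  have hAvmem : ({i | (T.adj.deleteEdges {s(u,v)}).Reachable (T.leaf i) v} : Set (Fin n)) ∈
      ({ {i | (T.adj.deleteEdges {s(u',v')}).Reachable (T.leaf i) u'},
         {i | (T.adj.deleteEdges {s(u',v')}).Reachable (T.leaf i) v'} } : Set (Set (Fin n))) := by
    rw [← hpair]
    exact Set.mem_insert_of_mem _ rfl
  rcases hAvmem with hAv | hAv
  · -- Av = A'u' : the middle leaf l lies in A'u' ⊆ Av, contradiction with l ∈ Au
    have : l ∈ ({i | (T.adj.deleteEdges {s(u,v)}).Reachable (T.leaf i) v} : Set (Fin n)) := by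
      rw [hAv]
      exact hlA'u'
    exact not_reach_both T h hlAu this
  · -- Av = A'v' : the v-side leaf lv also lies on the u'-side of e', contradiction
    obtain ⟨p⟩ := hlv
    have he'p : s(u', v') ∉ p.edges := by
      intro hmem
      have hu'sup : u' ∈ p.support := Walk.fst_mem_support_of_mem_edges p hmem
      have hr : (T.adj.deleteEdges {s(u,v)}).Reachable u' v := ⟨p.dropUntil u' hu'sup⟩
      exact tree_bridge T h (hu'u.symm.trans hr)
    have hTp : ∀ e0 ∈ (p.mapLe (deleteEdges_le {s(u,v)})).edges,
        e0 ∉ ({s(u',v')} : Set (Sym2 (Fin (2 * n - 2)))) := by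
      intro e0 he0 hmem
      rw [Set.mem_singleton_iff] at hmem
      rw [mapLe_edges] at he0
      exact he'p (hmem ▸ he0)
    have hreach : (T.adj.deleteEdges {s(u',v')}).Reachable (T.leaf lv) v :=
      ⟨((p.mapLe (deleteEdges_le {s(u,v)}))).toDeleteEdges _ hTp⟩
    have h1 : lv ∈ ({i | (T.adj.deleteEdges {s(u',v')}).Reachable (T.leaf i) u'} : Set (Fin n)) :=
      hreach.trans hvu'
    have h2 : lv ∈ ({i | (T.adj.deleteEdges {s(u',v')}).Reachable (T.leaf i) v'} : Set (Fin n)) := by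
      rw [← hAv]
      exact ⟨p⟩
    exact not_reach_both T h' h1 h2

lemma split_inj (T : PhyloTree n) {u v u' v' : Fin (2 * n - 2)}
    (h : s(u,v) ∈ T.adj.edgeSet) (h' : s(u',v') ∈ T.adj.edgeSet)
    (hpair : ({ {i | (T.adj.deleteEdges {s(u,v)}).Reachable (T.leaf i) u},
                {i | (T.adj.deleteEdges {s(u,v)}).Reachable (T.leaf i) v} } : Set (Set (Fin n))) =
             { {i | (T.adj.deleteEdges {s(u',v')}).Reachable (T.leaf i) u'},
               {i | (T.adj.deleteEdges {s(u',v')}).Reachable (T.leaf i) v'} }) :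
    s(u,v) = s(u',v') := by
  classical
  by_contra hne
  have dswap : ∀ a b : Fin (2 * n - 2),
      T.adj.deleteEdges {s(a,b)} = T.adj.deleteEdges {s(b,a)} := by
    intro a b
    rw [Sym2.eq_swap]
  have hadj' : (T.adj.deleteEdges {s(u,v)}).Adj u' v' :=
    SimpleGraph.deleteEdges_adj.mpr ⟨(SimpleGraph.mem_edgeSet _).mp h', by
      simp only [Set.mem_singleton_iff]
      exact fun hh => hne hh.symm⟩
  have hadj : (T.adj.deleteEdges {s(u',v')}).Adj u v :=
    SimpleGraph.deleteEdges_adj.mpr ⟨(SimpleGraph.mem_edgeSet _).mp h, by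
      simp only [Set.mem_singleton_iff]
      exact hne⟩
  rcases reach_or T (u := u) (v := v) u' with hu's | hu's <;>
    rcases reach_or T (u := u') (v := v') u with hus | hus
  · exact split_inj_core T h h' hne hu's (hadj'.reachable.symm.trans hu's) hus
      (hadj.reachable.symm.trans hus) hpair
  · -- u', v' on u-side of e ; u, v on v'-side of e'
    refine split_inj_core T h (show s(v',u') ∈ T.adj.edgeSet by rwa [Sym2.eq_swap])
      (by rw [Sym2.eq_swap (a := v') (b := u')]; exact hne)
      (hadj'.reachable.symm.trans hu's) hu's ?_ ?_ ?_
    · rw [dswap v' u']; exact hus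
    · rw [dswap v' u']; exact hadj.reachable.symm.trans hus
    · simp only [dswap v' u']
      rw [hpair]
      exact Set.pair_comm _ _
  · -- u', v' on v-side of e ; u, v on u'-side of e'
    refine split_inj_core T (show s(v,u) ∈ T.adj.edgeSet by rwa [Sym2.eq_swap]) h'
      (by rw [Sym2.eq_swap (a := v) (b := u)]; exact hne) ?_ ?_
      (hadj.reachable.symm.trans hus) hus ?_
    · rw [dswap v u]; exact hu's
    · rw [dswap v u]; exact hadj'.reachable.symm.trans hu's
    · simp only [dswap v u]
      rw [Set.pair_comm]
      exact hpair
  · -- both swapped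
    refine split_inj_core T (show s(v,u) ∈ T.adj.edgeSet by rwa [Sym2.eq_swap])
      (show s(v',u') ∈ T.adj.edgeSet by rwa [Sym2.eq_swap])
      (by rw [Sym2.eq_swap (a := v) (b := u), Sym2.eq_swap (a := v') (b := u')]; exact hne)
      ?_ ?_ ?_ ?_ ?_
    · rw [dswap v u]; exact hadj'.reachable.symm.trans hu's
    · rw [dswap v u]; exact hu's
    · rw [dswap v' u']; exact hadj.reachable.symm.trans hus
    · rw [dswap v' u']; exact hus
    · simp only [dswap v u, dswap v' u']
      rw [Set.pair_comm, hpair]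
      exact Set.pair_comm _ _

end SplitInj


section Count
variable {n : ℕ}

lemma sym2_rep {V : Type*} (e : Sym2 V) : ∃ ab : V × V, e = s(ab.1, ab.2) := by
  induction e using Sym2.ind with
  | _ a b => exact ⟨(a, b), rfl⟩

noncomputable def eFst {V : Type*} (e : Sym2 V) : V := (Classical.choose (sym2_rep e)).1
noncomputable def eSnd {V : Type*} (e : Sym2 V) : V := (Classical.choose (sym2_rep e)).2

lemma eSpec {V : Type*} (e : Sym2 V) : e = s(eFst e, eSnd e) :=
  Classical.choose_spec (sym2_rep e)

/-- The two characters associated to an edge of `T`. -/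
noncomputable def Phi (T : PhyloTree n) : Bool × T.adj.edgeSet → (Fin n → Bool) :=
  fun be i =>
    if (T.adj.deleteEdges {(be.2 : Sym2 (Fin (2 * n - 2)))}).Reachable
        (T.leaf i) (eFst (be.2 : Sym2 (Fin (2 * n - 2)))) then be.1 else !be.1

lemma Phi_facts (T : PhyloTree n) (b : Bool) (e : T.adj.edgeSet) :
    (∃ i j, Phi T (b, e) i ≠ Phi T (b, e) j) ∧
    ({ {i | Phi T (b, e) i = false}, {i | Phi T (b, e) i = true} } : Set (Set (Fin n))) =
      { {i | (T.adj.deleteEdges {s(eFst e.val, eSnd e.val)}).Reachable (T.leaf i) (eFst e.val)},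
        {i | (T.adj.deleteEdges {s(eFst e.val, eSnd e.val)}).Reachable (T.leaf i) (eSnd e.val)} } := by
  set u := eFst (e.val) with hu
  set v := eSnd (e.val) with hv
  have hedge : s(u, v) ∈ T.adj.edgeSet := by rw [← eSpec]; exact e.prop
  have hDel : ({(e.val : Sym2 (Fin (2 * n - 2)))} : Set _) = {s(u, v)} := by rw [← eSpec]
  have hval : ∀ i, ((T.adj.deleteEdges {s(u,v)}).Reachable (T.leaf i) u →
      Phi T (b, e) i = b) ∧
      ((T.adj.deleteEdges {s(u,v)}).Reachable (T.leaf i) v → Phi T (b, e) i = !b) := by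
    intro i
    constructor
    · intro hr
      simp only [Phi, hDel]
      rw [if_pos hr]
    · intro hr
      have hnr : ¬ (T.adj.deleteEdges {s(u,v)}).Reachable (T.leaf i) u :=
        fun hr' => not_reach_both T hedge hr' hr
      simp only [Phi, hDel]
      rw [if_neg hnr]
  have hvu : ∀ i, Phi T (b, e) i = b ↔
      (T.adj.deleteEdges {s(u,v)}).Reachable (T.leaf i) u := by
    intro i
    constructor
    · intro hb
      by_contra hnr
      have hr := (reach_or T (T.leaf i)).resolve_left hnr
      have := (hval i).2 hr
      rw [this] at hb
      cases b <;> simp at hb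
    · exact (hval i).1
  have hvv : ∀ i, Phi T (b, e) i = !b ↔
      (T.adj.deleteEdges {s(u,v)}).Reachable (T.leaf i) v := by
    intro i
    constructor
    · intro hb
      by_contra hnr
      rcases reach_or T (u := u) (v := v) (T.leaf i) with hr | hr
      · have := (hval i).1 hr
        rw [this] at hb
        cases b <;> simp at hb
      · exact hnr hr
    · exact (hval i).2
  constructor
  · obtain ⟨iu, hiu⟩ := exists_leaf_side T hedge
    obtain ⟨iv, hiv⟩ := exists_leaf_side' T hedge
    refine ⟨iu, iv, ?_⟩
    rw [(hval iu).1 hiu, (hval iv).2 hiv]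
    cases b <;> simp
  · cases b
    · have h1 : {i | Phi T (false, e) i = false} =
          {i | (T.adj.deleteEdges {s(u,v)}).Reachable (T.leaf i) u} := by
        ext i; exact hvu i
      have h2 : {i | Phi T (false, e) i = true} =
          {i | (T.adj.deleteEdges {s(u,v)}).Reachable (T.leaf i) v} := by
        ext i
        have := hvv i
        simpa using this
      rw [h1, h2]
    · have h1 : {i | Phi T (true, e) i = true} =
          {i | (T.adj.deleteEdges {s(u,v)}).Reachable (T.leaf i) u} := by
        ext i; exact hvu i
      have h2 : {i | Phi T (true, e) i = false} =
          {i | (T.adj.deleteEdges {s(u,v)}).Reachable (T.leaf i) v} := by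
        ext i
        have := hvv i
        simpa using this
      rw [h1, h2, Set.pair_comm]

lemma range_Phi (T : PhyloTree n) :
    Set.range (Phi T) = {f : Fin n → Bool | (∃ i j, f i ≠ f j) ∧
      ({ {i | f i = false}, {i | f i = true} } : Set (Set (Fin n))) ∈ splits T} := by
  ext f
  constructor
  · rintro ⟨⟨b, e⟩, rfl⟩
    obtain ⟨hnc, hpair⟩ := Phi_facts T b e
    refine ⟨hnc, ?_⟩
    have hedge : s(eFst e.val, eSnd e.val) ∈ T.adj.edgeSet := by rw [← eSpec]; exact e.prop
    exact ⟨eFst e.val, eSnd e.val, hedge, hpair⟩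
  · rintro ⟨hnc, u, v, hedge, hpair⟩
    set e : T.adj.edgeSet := ⟨s(u,v), hedge⟩ with he
    have hes : s(u, v) = s(eFst e.val, eSnd e.val) := eSpec e.val
    -- transport the pair equation to the canonical representatives
    have hedge' : s(eFst e.val, eSnd e.val) ∈ T.adj.edgeSet := by rw [← hes]; exact hedge
    have hpair' : ({ {i | f i = false}, {i | f i = true} } : Set (Set (Fin n))) =
        { {i | (T.adj.deleteEdges {s(eFst e.val, eSnd e.val)}).Reachable (T.leaf i) (eFst e.val)},
          {i | (T.adj.deleteEdges {s(eFst e.val, eSnd e.val)}).Reachable (T.leaf i) (eSnd e.val)} } := by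
      rcases Sym2.eq_iff.mp hes with ⟨h1, h2⟩ | ⟨h1, h2⟩
      · rw [← h1, ← h2]; exact hpair
      · rw [← h1, ← h2, show s(v, u) = s(u, v) from Sym2.eq_swap, hpair]
        exact Set.pair_comm _ _
    obtain ⟨b, hAu, hAv⟩ := pair_cases hedge' hpair'
    refine ⟨(b, e), ?_⟩
    funext i
    simp only [Phi]
    have hDel : ({(e.val : Sym2 (Fin (2 * n - 2)))} : Set _) =
        {s(eFst e.val, eSnd e.val)} := by rw [← eSpec]
    simp only [hDel]
    by_cases hr : (T.adj.deleteEdges {s(eFst e.val, eSnd e.val)}).Reachable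
        (T.leaf i) (eFst e.val)
    · rw [if_pos hr]
      have : i ∈ {i | f i = b} := by rw [← hAu]; exact hr
      exact this.symm
    · rw [if_neg hr]
      have hrv : (T.adj.deleteEdges {s(eFst e.val, eSnd e.val)}).Reachable
          (T.leaf i) (eSnd e.val) := (reach_or T (T.leaf i)).resolve_left hr
      have : i ∈ {i | f i = !b} := by rw [← hAv]; exact hrv
      exact this.symm

lemma Phi_inj (T : PhyloTree n) : Function.Injective (Phi T) := by
  rintro ⟨b, e⟩ ⟨b', e'⟩ heq
  have hf1 := Phi_facts T b e
  have hf2 := Phi_facts T b' e'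
  rw [heq] at hf1
  have hpair := hf1.2.symm.trans hf2.2
  have hedge : s(eFst e.val, eSnd e.val) ∈ T.adj.edgeSet := by rw [← eSpec]; exact e.prop
  have hedge' : s(eFst e'.val, eSnd e'.val) ∈ T.adj.edgeSet := by rw [← eSpec]; exact e'.prop
  have hee : e = e' := by
    apply Subtype.ext
    rw [eSpec e.val, eSpec e'.val]
    exact split_inj T hedge hedge' hpair
  subst hee
  -- now b = b'
  obtain ⟨iu, hiu⟩ := exists_leaf_side T hedge
  have hb : Phi T (b, e) iu = b := by
    simp only [Phi]
    simp only [show ({(e.val : Sym2 (Fin (2 * n - 2)))} : Set _) =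
      {s(eFst e.val, eSnd e.val)} from by rw [← eSpec]]
    rw [if_pos hiu]
  have hb' : Phi T (b', e) iu = b' := by
    simp only [Phi]
    simp only [show ({(e.val : Sym2 (Fin (2 * n - 2)))} : Set _) =
      {s(eFst e.val, eSnd e.val)} from by rw [← eSpec]]
    rw [if_pos hiu]
  rw [heq] at hb
  rw [hb' ] at hb
  rw [hb]

lemma edge_count (hn : 3 ≤ n) (T : PhyloTree n) :
    Nat.card T.adj.edgeSet + 1 = 2 * n - 2 := by
  classical
  haveI : Fintype T.adj.edgeSet := (Set.toFinite _).fintype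
  have htree : T.adj.IsTree := ⟨T.connected, T.acyclic⟩
  have h1 := htree.card_edgeFinset
  rw [Fintype.card_fin] at h1
  have h2 : T.adj.edgeFinset.card = Fintype.card T.adj.edgeSet :=
    SimpleGraph.edgeFinset_card
  rw [Nat.card_eq_fintype_card]
  omega

lemma S_card (hn : 3 ≤ n) (T : PhyloTree n) :
    {f : Fin n → Bool | ∀ T'' : PhyloTree n, ps f T ≤ ps f T''}.ncard =
      2 + 2 * (2 * n - 3) := by
  have hSeq : {f : Fin n → Bool | ∀ T'' : PhyloTree n, ps f T ≤ ps f T''} =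
      {f : Fin n → Bool | ∀ i j, f i = f j} ∪
      {f : Fin n → Bool | (∃ i j, f i ≠ f j) ∧
        ({ {i | f i = false}, {i | f i = true} } : Set (Set (Fin n))) ∈ splits T} := by
    ext f
    simp only [Set.mem_setOf_eq, Set.mem_union]
    constructor
    · intro hMP
      by_cases hc : ∀ i j, f i = f j
      · exact Or.inl hc
      · push_neg at hc
        right
        obtain ⟨T0, hT0⟩ := exists_tree_ps_le_one hn hc
        have h1 : ps f T = 1 :=
          le_antisymm (le_trans (hMP T0) hT0) (one_le_ps hc)
        exact ⟨hc, split_of_ps_eq_one h1⟩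
    · rintro (hc | ⟨hnc, hsp⟩)
      · intro T''
        rw [ps_eq_zero_of_const T hc]
        exact Nat.zero_le _
      · intro T''
        rw [ps_eq_one_of_split hnc hsp]
        exact one_le_ps hnc
  rw [hSeq]
  have hdisj : Disjoint {f : Fin n → Bool | ∀ i j, f i = f j}
      {f : Fin n → Bool | (∃ i j, f i ≠ f j) ∧
        ({ {i | f i = false}, {i | f i = true} } : Set (Set (Fin n))) ∈ splits T} := by
    rw [Set.disjoint_left]
    rintro f hf ⟨⟨i, j, hij⟩, -⟩
    exact hij (hf i j)
  rw [Set.ncard_union_eq hdisj (Set.toFinite _) (Set.toFinite _)]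
  have hC : {f : Fin n → Bool | ∀ i j, f i = f j}.ncard = 2 := by
    have : {f : Fin n → Bool | ∀ i j, f i = f j} =
        {(fun _ => false : Fin n → Bool), (fun _ => true : Fin n → Bool)} := by
      ext f
      simp only [Set.mem_setOf_eq, Set.mem_insert_iff, Set.mem_singleton_iff]
      constructor
      · intro h
        cases hf0 : f ⟨0, by omega⟩
        · left; funext i; rw [h i ⟨0, by omega⟩, hf0]
        · right; funext i; rw [h i ⟨0, by omega⟩, hf0]
      · rintro (rfl | rfl) <;> exact fun i j => rfl
    rw [this]
    refine Set.ncard_pair ?_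
    intro hcon
    have := congrFun hcon ⟨0, by omega⟩
    simp at this
  have hK : {f : Fin n → Bool | (∃ i j, f i ≠ f j) ∧
      ({ {i | f i = false}, {i | f i = true} } : Set (Set (Fin n))) ∈ splits T}.ncard =
      2 * (2 * n - 3) := by
    rw [← range_Phi]
    have hb : Nat.card Bool = 2 := by
      rw [Nat.card_eq_fintype_card, Fintype.card_bool]
    have hcalc : (Set.range (Phi T)).ncard = Nat.card Bool * Nat.card T.adj.edgeSet := by
      rw [← Nat.card_coe_set_eq, Nat.card_range_of_injective (Phi_inj T), Nat.card_prod]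
    have hec := edge_count hn T
    rw [hcalc, hb]
    clear hcalc hb hdisj hC hSeq
    omega
  rw [hC, hK]
end Count


/-- For n ≥ 3 and a single character (k = 1), every binary phylogenetic tree on
{1,…,n} is a maximum parsimony tree for the same number of characters. -/
theorem stmt17 (n : ℕ) (hn : 3 ≤ n) (T T' : PhyloTree n) :
    Set.ncard {f : Fin n → Bool | ∀ T'' : PhyloTree n, ps f T ≤ ps f T''} =
      Set.ncard {f : Fin n → Bool | ∀ T'' : PhyloTree n, ps f T' ≤ ps f T''} := by
  rw [S_card hn T, S_card hn T']
end

section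
/- Let 2 ≤ n ≤ 5 and k ≥ 1. Then for every pair of binary phylogenetic trees T, T' on leaf set {1,…,n}, the number of k-tuples (f_1,…,f_k) of characters for which T is a maximum parsimony tree equals the number of k-tuples for which T' is a maximum parsimony tree. That is, for at most five leaves, the probability of being a maximum parsimony tree for k uniformly random two-state characters is the same for every tree in UB(n). -/
open Classical

open Classical SimpleGraph

section Aux
variable {V : Type*} {G : SimpleGraph V}

lemma aux_no3 (hG : G.IsAcyclic) {a b c : V} (hab : G.Adj a b) (hbc : G.Adj b c)
    (hca : G.Adj c a) : False := by
  have hac : a ≠ c := fun h => by subst h; exact G.irrefl hca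
  have hp1 : (Walk.cons hca.symm Walk.nil : G.Walk a c).IsPath := by
    simp [Walk.isPath_def, hac]
  have hp2 : (Walk.cons hab (Walk.cons hbc Walk.nil) : G.Walk a c).IsPath := by
    simp [Walk.isPath_def, hab.ne, hbc.ne, hac]
  have h := hG.path_unique ⟨_, hp1⟩ ⟨_, hp2⟩
  have := congrArg (fun p : G.Path a c => p.1.length) h
  simp at this

lemma aux_no4 (hG : G.IsAcyclic) {a b c d : V} (hab : G.Adj a b) (hbc : G.Adj b c)
    (hcd : G.Adj c d) (hda : G.Adj d a) (hac : a ≠ c) (hbd : b ≠ d) : False := by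
  have hp1 : (Walk.cons hab (Walk.cons hbc Walk.nil) : G.Walk a c).IsPath := by
    simp [Walk.isPath_def, hab.ne, hbc.ne, hac]
  have hp2 : (Walk.cons hda.symm (Walk.cons hcd.symm Walk.nil) : G.Walk a c).IsPath := by
    simp [Walk.isPath_def, hda.ne', hcd.ne', hac]
  have h := hG.path_unique ⟨_, hp1⟩ ⟨_, hp2⟩
  have hs := congrArg (fun p : G.Path a c => p.1.support) h
  simp at hs
  exact hbd hs

lemma aux_no5 (hG : G.IsAcyclic) {a b c d e : V} (hab : G.Adj a b) (hbc : G.Adj b c)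
    (hcd : G.Adj c d) (hde : G.Adj d e) (hea : G.Adj e a)
    (hac : a ≠ c) (had : a ≠ d) (hce : c ≠ e) : False := by
  have hp1 : (Walk.cons hab (Walk.cons hbc Walk.nil) : G.Walk a c).IsPath := by
    simp [Walk.isPath_def, hab.ne, hbc.ne, hac]
  have hp2 : (Walk.cons hea.symm (Walk.cons hde.symm
      (Walk.cons hcd.symm Walk.nil)) : G.Walk a c).IsPath := by
    simp [Walk.isPath_def, hea.ne', hde.ne', hcd.ne', hac, had, hce.symm]
  have h := hG.path_unique ⟨_, hp1⟩ ⟨_, hp2⟩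
  have := congrArg (fun p : G.Path a c => p.1.length) h
  simp at this

lemma aux_closed (S : Set V) (hS : ∀ u ∈ S, ∀ v, G.Adj u v → v ∈ S)
    {x y : V} (p : G.Walk x y) (hx : x ∈ S) : y ∈ S := by
  induction p with
  | nil => exact hx
  | cons h p ih => exact ih (hS _ hx _ h)

lemma aux_nbr_eq {u w : V} (h1 : (G.neighborSet u).ncard = 1) (hw : G.Adj u w) :
    G.neighborSet u = {w} := by
  obtain ⟨a, ha⟩ := Set.ncard_eq_one.mp h1
  have hm : w ∈ G.neighborSet u := hw
  rw [ha] at hm ⊢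
  simp at hm; subst hm; rfl

end Aux
section Transfer
variable {n k : ℕ}

lemma diff_iff (g : Fin (2*n-2) → Bool) (x y : Fin (2*n-2)) :
    (∃ u v, s(x,y) = s(u,v) ∧ g u ≠ g v) ↔ g x ≠ g y := by
  constructor
  · rintro ⟨u, v, h, hne⟩
    rw [Sym2.eq_iff] at h
    rcases h with ⟨rfl, rfl⟩ | ⟨rfl, rfl⟩
    · exact hne
    · exact hne.symm
  · exact fun h => ⟨x, y, rfl, h⟩

lemma cn_transfer (T T' : PhyloTree n) (σ : Fin (2*n-2) ≃ Fin (2*n-2))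
    (hσ : ∀ u v, T'.adj.Adj (σ u) (σ v) ↔ T.adj.Adj u v)
    (g : Fin (2*n-2) → Bool) :
    changingNumber T' g = changingNumber T (g ∘ σ) := by
  unfold changingNumber
  have himg : {e : Sym2 (Fin (2*n-2)) | e ∈ T'.adj.edgeSet ∧ ∃ u v, e = s(u,v) ∧ g u ≠ g v}
      = Sym2.map σ '' {e : Sym2 (Fin (2*n-2)) |
          e ∈ T.adj.edgeSet ∧ ∃ u v, e = s(u,v) ∧ (g ∘ σ) u ≠ (g ∘ σ) v} := by
    ext e
    induction e using Sym2.ind with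
    | _ x y =>
      simp only [Set.mem_setOf_eq, Set.mem_image, SimpleGraph.mem_edgeSet, diff_iff]
      constructor
      · rintro ⟨hadj, hne⟩
        refine ⟨s(σ.symm x, σ.symm y), ⟨?_, ?_⟩, by simp⟩
        · rw [SimpleGraph.mem_edgeSet, ← hσ]; simpa using hadj
        · rw [diff_iff]; simpa using hne
      · rintro ⟨e', ⟨hadj, hne⟩, he⟩
        induction e' using Sym2.ind with
        | _ u v =>
          rw [diff_iff] at hne
          simp only [Sym2.map_pair_eq, Sym2.eq_iff] at he
          rcases he with ⟨rfl, rfl⟩ | ⟨rfl, rfl⟩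
          · exact ⟨(hσ u v).mpr hadj, hne⟩
          · exact ⟨((hσ u v).mpr hadj).symm, hne.symm⟩
  rw [himg, Set.ncard_image_of_injective _ (Sym2.map.injective σ.injective)]

lemma ps_transfer (T T' : PhyloTree n) (σ : Fin (2*n-2) ≃ Fin (2*n-2))
    (hσ : ∀ u v, T'.adj.Adj (σ u) (σ v) ↔ T.adj.Adj u v)
    (π : Equiv.Perm (Fin n)) (hπ : ∀ i, T'.leaf (π i) = σ (T.leaf i))
    (f : Fin n → Bool) : ps f T' = ps (f ∘ π) T := by
  unfold ps
  congr 1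
  ext m
  constructor
  · rintro ⟨g, hg, rfl⟩
    refine ⟨g ∘ σ, fun i => ?_, (cn_transfer T T' σ hσ g).symm⟩
    simp only [Function.comp_apply, ← hπ, hg]
  · rintro ⟨g, hg, rfl⟩
    refine ⟨g ∘ σ.symm, fun i => ?_, ?_⟩
    · have := hg (π.symm i)
      simp only [Function.comp_apply] at this ⊢
      rw [← π.apply_symm_apply i, hπ] at *
      simpa using this
    · rw [cn_transfer T T' σ hσ (g ∘ σ.symm)]
      congr 1
      ext v
      simp

def PhyloTree.relabel (T : PhyloTree n) (π : Equiv.Perm (Fin n)) : PhyloTree n where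
  adj := T.adj
  connected := T.connected
  acyclic := T.acyclic
  degOneOrThree := T.degOneOrThree
  leaf := T.leaf ∘ π
  leaf_inj := T.leaf_inj.comp π.injective
  leaf_range := fun v => (T.leaf_range v).trans
    ⟨fun ⟨i, h⟩ => ⟨π.symm i, by simpa using h⟩, fun ⟨i, h⟩ => ⟨π i, h⟩⟩

lemma ps_relabel (T : PhyloTree n) (π : Equiv.Perm (Fin n)) (f : Fin n → Bool) :
    ps f (T.relabel π) = ps (f ∘ π.symm) T := by
  refine ps_transfer T (T.relabel π) (Equiv.refl _) (fun u v => Iff.rfl) π.symm (fun i => ?_) f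
  simp [PhyloTree.relabel]

lemma mp_transfer (T T' : PhyloTree n) (σ : Fin (2*n-2) ≃ Fin (2*n-2))
    (hσ : ∀ u v, T'.adj.Adj (σ u) (σ v) ↔ T.adj.Adj u v)
    (π : Equiv.Perm (Fin n)) (hπ : ∀ i, T'.leaf (π i) = σ (T.leaf i))
    (F : Fin k → Fin n → Bool) :
    IsMPTree F T' ↔ IsMPTree (fun i => F i ∘ π) T := by
  constructor
  · intro h S
    have h1 := h (S.relabel π.symm)
    calc ∑ i, ps (F i ∘ π) T = ∑ i, ps (F i) T' := by
          refine Finset.sum_congr rfl fun i _ => (ps_transfer T T' σ hσ π hπ (F i)).symm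
      _ ≤ ∑ i, ps (F i) (S.relabel π.symm) := h1
      _ = ∑ i, ps (F i ∘ π) S := by
          refine Finset.sum_congr rfl fun i _ => ?_
          rw [ps_relabel]; simp
  · intro h S
    have h1 := h (S.relabel π)
    calc ∑ i, ps (F i) T' = ∑ i, ps (F i ∘ π) T := by
          refine Finset.sum_congr rfl fun i _ => ps_transfer T T' σ hσ π hπ (F i)
      _ ≤ ∑ i, ps (F i ∘ π) (S.relabel π) := h1
      _ = ∑ i, ps (F i) S := by
          refine Finset.sum_congr rfl fun i _ => ?_
          rw [ps_relabel]
          congr 1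
          ext j; simp

lemma count_transfer (T T' : PhyloTree n) (σ : Fin (2*n-2) ≃ Fin (2*n-2))
    (hσ : ∀ u v, T'.adj.Adj (σ u) (σ v) ↔ T.adj.Adj u v)
    (π : Equiv.Perm (Fin n)) (hπ : ∀ i, T'.leaf (π i) = σ (T.leaf i)) :
    Set.ncard {F : Fin k → Fin n → Bool | IsMPTree F T'}
      = Set.ncard {F : Fin k → Fin n → Bool | IsMPTree F T} := by
  have hset : {F : Fin k → Fin n → Bool | IsMPTree F T'}
      = (fun (G : Fin k → Fin n → Bool) => fun i => G i ∘ π.symm) '' {F | IsMPTree F T} := by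
    ext F
    simp only [Set.mem_setOf_eq, Set.mem_image]
    constructor
    · intro h
      refine ⟨fun i => F i ∘ π, ?_, by ext i j; simp⟩
      exact (mp_transfer T T' σ hσ π hπ F).mp h
    · rintro ⟨G, hG, rfl⟩
      rw [mp_transfer T T' σ hσ π hπ]
      convert hG using 2
      ext i j
      simp
  rw [hset, Set.ncard_image_of_injective]
  intro a b hab
  ext i j
  have := congrFun (congrFun hab i) (π j)
  simpa using this

lemma exists_pi (T T' : PhyloTree n) (σ : Fin (2*n-2) ≃ Fin (2*n-2))
    (hσ : ∀ u v, T'.adj.Adj (σ u) (σ v) ↔ T.adj.Adj u v) :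
    ∃ π : Equiv.Perm (Fin n), ∀ i, T'.leaf (π i) = σ (T.leaf i) := by
  have hdeg : ∀ v, (T'.adj.neighborSet (σ v)).ncard = (T.adj.neighborSet v).ncard := by
    intro v
    have : T'.adj.neighborSet (σ v) = σ '' T.adj.neighborSet v := by
      ext w
      simp only [SimpleGraph.mem_neighborSet, Set.mem_image]
      constructor
      · intro h
        exact ⟨σ.symm w, by rw [← hσ]; simpa using h, by simp⟩
      · rintro ⟨u, hu, rfl⟩
        exact (hσ v u).mpr hu
    rw [this, Set.ncard_image_of_injective _ σ.injective]
  have hex : ∀ i, ∃ j, T'.leaf j = σ (T.leaf i) := by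
    intro i
    rw [← T'.leaf_range, hdeg, T.leaf_range]
    exact ⟨i, rfl⟩
  choose π0 hπ0 using hex
  have hinj : Function.Injective π0 := by
    intro i j hij
    have h2 : σ (T.leaf i) = σ (T.leaf j) := by rw [← hπ0 i, ← hπ0 j, hij]
    exact T.leaf_inj (σ.injective h2)
  exact ⟨Equiv.ofBijective π0 (Finite.injective_iff_bijective.mp hinj),
    fun i => hπ0 i⟩

end Transfer
section Aux2
variable {α : Type*} [Finite α]

lemma aux_two_of_three {s : Set α} (h3 : s.ncard = 3) {A C : α} (hA : A ∈ s) (hC : C ∈ s)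
    (hAC : A ≠ C) : ∃ w, w ≠ A ∧ w ≠ C ∧ s = {A, C, w} := by
  have hsub : ({A, C} : Set α) ⊆ s := by
    rintro x (rfl | rfl); exacts [hA, hC]
  have hd : (s \ {A, C}).ncard = 1 := by
    rw [Set.ncard_diff hsub, h3]
    rw [Set.ncard_pair hAC]
  obtain ⟨w, hw⟩ := Set.nonempty_of_ncard_ne_zero (s := s \ {A, C}) (by omega)
  obtain ⟨hws, hwn⟩ := hw
  simp only [Set.mem_insert_iff, Set.mem_singleton_iff, not_or] at hwn
  refine ⟨w, hwn.1, hwn.2, ?_⟩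
  have hsub2 : ({A, C, w} : Set α) ⊆ s := by
    rintro x (rfl | rfl | rfl); exacts [hA, hC, hws]
  have hcard : ({A, C, w} : Set α).ncard = 3 := by
    rw [Set.ncard_insert_of_notMem (by simp [hAC, Ne.symm hwn.1]),
      Set.ncard_insert_of_notMem (by simp [Ne.symm hwn.2]), Set.ncard_singleton]
  exact (Set.eq_of_subset_of_ncard_le hsub2 (by omega) (Set.toFinite s)).symm

lemma aux_one_of_three {s : Set α} (h3 : s.ncard = 3) {B : α} (hB : B ∈ s) :
    ∃ x y, x ≠ B ∧ y ≠ B ∧ x ≠ y ∧ s = {B, x, y} := by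
  have hd : (s \ {B}).ncard = 2 := by
    rw [Set.ncard_diff (by simpa using hB), h3, Set.ncard_singleton]
  obtain ⟨x, hx⟩ := Set.nonempty_of_ncard_ne_zero (s := s \ {B}) (by omega)
  obtain ⟨hxs, hxB⟩ := hx
  simp only [Set.mem_singleton_iff] at hxB
  obtain ⟨w, hwB, hwx, hs⟩ := aux_two_of_three h3 hB hxs (Ne.symm hxB)
  exact ⟨x, w, hxB, hwB, Ne.symm hwx, hs⟩

end Aux2

section Aux3
variable {m : ℕ} {G : SimpleGraph (Fin m)}

lemma aux_univ_mem (hc : G.Connected) (S : Set (Fin m))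
    (hS : ∀ u ∈ S, ∀ v, G.Adj u v → v ∈ S) {s0 : Fin m} (h0 : s0 ∈ S) : ∀ x, x ∈ S :=
  fun x => aux_closed S hS ((hc.preconnected s0 x).some) h0

lemma aux_exists_deg3 (hm : 3 ≤ m) (hc : G.Connected)
    (hdeg : ∀ v, (G.neighborSet v).ncard = 1 ∨ (G.neighborSet v).ncard = 3) :
    ∃ v, (G.neighborSet v).ncard = 3 := by
  by_contra hno
  push_neg at hno
  have hdeg1 : ∀ v, (G.neighborSet v).ncard = 1 := fun v => (hdeg v).resolve_right (hno v)
  set v0 : Fin m := ⟨0, by omega⟩ with hv0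
  obtain ⟨w, hw⟩ := Set.ncard_eq_one.mp (hdeg1 v0)
  have hadj : G.Adj v0 w := by
    have : w ∈ G.neighborSet v0 := by rw [hw]; rfl
    exact this
  have hw' : G.neighborSet w = {v0} := aux_nbr_eq (hdeg1 w) hadj.symm
  have hcl : ∀ u ∈ ({v0, w} : Set (Fin m)), ∀ v, G.Adj u v → v ∈ ({v0, w} : Set (Fin m)) := by
    rintro u hu v hv
    simp only [Set.mem_insert_iff, Set.mem_singleton_iff] at hu
    have hvmem : v ∈ G.neighborSet u := hv
    rcases hu with rfl | rfl
    · rw [hw] at hvmem; simp at hvmem; simp [hvmem]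
    · rw [hw'] at hvmem; simp at hvmem; simp [hvmem]
  have hall := aux_univ_mem hc _ hcl (by simp : v0 ∈ ({v0, w} : Set (Fin m)))
  have hsub : (Set.univ : Set (Fin m)) ⊆ {v0, w} := fun x _ => hall x
  have h1 := Set.ncard_le_ncard hsub (Set.toFinite _)
  have h2 := Set.ncard_insert_le v0 ({w} : Set (Fin m))
  rw [Set.ncard_univ] at h1
  simp [Set.ncard_singleton] at h2
  simp only [Nat.card_eq_fintype_card, Fintype.card_fin] at h1
  omega

lemma aux_adj_of_mem {u v : Fin m} {s : Set (Fin m)} (h : G.neighborSet u = s) (hv : v ∈ s) :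
    G.Adj u v := by
  have : v ∈ G.neighborSet u := h ▸ hv
  exact this

lemma iso_of_canon {G G' : SimpleGraph (Fin m)} (P : Fin m → Fin m → Prop)
    (e e' : Fin m ≃ Fin m) (h : ∀ i j, G.Adj (e i) (e j) ↔ P i j)
    (h' : ∀ i j, G'.Adj (e' i) (e' j) ↔ P i j) :
    ∃ σ : Fin m ≃ Fin m, ∀ u v, G'.Adj (σ u) (σ v) ↔ G.Adj u v := by
  refine ⟨e.symm.trans e', fun u v => ?_⟩
  have h1 := h' (e.symm u) (e.symm v)
  have h2 := h (e.symm u) (e.symm v)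
  simp only [Equiv.apply_symm_apply] at h2
  simp only [Equiv.trans_apply]
  rw [h1, ← h2]

end Aux3
section Canon23

lemma canon2 (T : PhyloTree 2) : ∀ u v, T.adj.Adj u v ↔ u ≠ v := by
  intro u v
  constructor
  · exact fun h => h.ne
  · intro huv
    obtain ⟨p⟩ := T.connected.preconnected u v
    cases p with
    | nil => exact absurd rfl huv
    | cons h q =>
      rename_i x
      have hxv : x = v := by
        have b1 := x.isLt; have b2 := u.isLt; have b3 := v.isLt
        have e1 : x.val ≠ u.val := by simpa [Fin.val_inj] using h.ne'
        have e2 : u.val ≠ v.val := by simpa [Fin.val_inj] using huv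
        exact Fin.val_inj.mp (by omega)
      subst hxv; exact h

lemma exists_iso2 (T T' : PhyloTree 2) :
    ∃ σ : Fin (2*2-2) ≃ Fin (2*2-2), ∀ u v, T'.adj.Adj (σ u) (σ v) ↔ T.adj.Adj u v :=
  ⟨Equiv.refl _, fun u v => by
    simp only [Equiv.refl_apply]
    rw [canon2 T' u v, canon2 T u v]⟩

lemma canon3 (T : PhyloTree 3) :
    ∃ e : Fin (2*3-2) ≃ Fin (2*3-2), ∀ i j, T.adj.Adj (e i) (e j) ↔
      ((i = 0 ∧ j ≠ 0) ∨ (j = 0 ∧ i ≠ 0)) := by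
  obtain ⟨c, hc3⟩ := aux_exists_deg3 (by omega) T.connected T.degOneOrThree
  obtain ⟨p, q, r, hpq, hpr, hqr, hset⟩ := Set.ncard_eq_three.mp hc3
  have hcp : T.adj.Adj c p := aux_adj_of_mem hset (by simp)
  have hcq : T.adj.Adj c q := aux_adj_of_mem hset (by simp)
  have hcr : T.adj.Adj c r := aux_adj_of_mem hset (by simp)
  have hdeg1 : ∀ x, T.adj.Adj c x → T.adj.neighborSet x = {c} := by
    intro x hcx
    have h1 : (T.adj.neighborSet x).ncard = 1 := by
      rcases T.degOneOrThree x with h | h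
      · exact h
      · exfalso
        have hsub : T.adj.neighborSet x ⊆ Set.univ \ {x} := fun v hv =>
          ⟨trivial, by simpa using (SimpleGraph.Adj.ne' hv)⟩
        have hdcard : (Set.univ \ {x} : Set (Fin (2*3-2))).ncard = 3 := by
          rw [Set.ncard_diff (Set.subset_univ _), Set.ncard_univ, Set.ncard_singleton]
          simp
        have heq : T.adj.neighborSet x = Set.univ \ {x} :=
          Set.eq_of_subset_of_ncard_le hsub (by omega) (Set.toFinite _)
        have hxm : x ∈ ({p, q, r} : Set (Fin (2*3-2))) := by rw [← hset]; exact hcx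
        have hy : ∃ y, y ∈ ({p, q, r} : Set (Fin (2*3-2))) ∧ y ≠ x := by
          rcases hxm with rfl | rfl | rfl
          · exact ⟨q, by simp, Ne.symm hpq⟩
          · exact ⟨p, by simp, hpq⟩
          · exact ⟨p, by simp, hpr⟩
        obtain ⟨y, hy, hyx⟩ := hy
        have hcy : T.adj.Adj c y := aux_adj_of_mem hset hy
        have hxy : T.adj.Adj x y := by
          have : y ∈ T.adj.neighborSet x := by
            rw [heq]; exact ⟨trivial, by simpa using hyx⟩
          exact this
        exact aux_no3 T.acyclic hcx hxy hcy.symm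
    exact aux_nbr_eq h1 hcx.symm
  have hnp := hdeg1 p hcp
  have hnq := hdeg1 q hcq
  have hnr := hdeg1 r hcr
  have hcp' := hcp.ne; have hcq' := hcq.ne; have hcr' := hcr.ne
  -- universe
  have huniv : ({c, p, q, r} : Set (Fin (2*3-2))) = Set.univ := by
    have hcard : ({c, p, q, r} : Set (Fin (2*3-2))).ncard = 4 := by
      rw [Set.ncard_insert_of_notMem (by simp [hcp', hcq', hcr']),
        Set.ncard_insert_of_notMem (by simp [hpq, hpr]),
        Set.ncard_insert_of_notMem (by simp [hqr]), Set.ncard_singleton]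
    refine Set.eq_of_subset_of_ncard_le (Set.subset_univ _) ?_ (Set.toFinite _)
    rw [Set.ncard_univ]
    simp [hcard]
  have hchar : ∀ u v, T.adj.Adj u v ↔ ((u = c ∧ v ≠ c) ∨ (v = c ∧ u ≠ c)) := by
    intro u v
    constructor
    · intro h
      have hu : u ∈ ({c, p, q, r} : Set (Fin (2*3-2))) := huniv ▸ Set.mem_univ u
      have leafcase : ∀ x, T.adj.neighborSet x = {c} → x = u → (v = c ∧ u ≠ c) := by
        intro x hx hxu
        subst hxu
        have : v ∈ T.adj.neighborSet x := h
        rw [hx] at this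
        simp at this
        exact ⟨this, fun hh => T.adj.irrefl (hh ▸ (aux_adj_of_mem hx rfl : T.adj.Adj x c))⟩
      rcases hu with rfl | rfl | rfl | rfl
      · exact Or.inl ⟨rfl, h.ne'⟩
      · exact Or.inr (leafcase _ hnp rfl)
      · exact Or.inr (leafcase _ hnq rfl)
      · exact Or.inr (leafcase _ hnr rfl)
    · rintro (⟨hu, hv⟩ | ⟨hv, hu⟩)
      · have hm : v ∈ ({c, p, q, r} : Set (Fin (2*3-2))) := huniv ▸ Set.mem_univ v
        rw [hu]
        rcases hm with rfl | rfl | rfl | rfl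
        · exact absurd rfl hv
        exacts [hcp, hcq, hcr]
      · have hm : u ∈ ({c, p, q, r} : Set (Fin (2*3-2))) := huniv ▸ Set.mem_univ u
        rw [hv]
        rcases hm with rfl | rfl | rfl | rfl
        · exact absurd rfl hu
        exacts [hcp.symm, hcq.symm, hcr.symm]
  -- the equivalence
  have hinj : Function.Injective (![c, p, q, r] : Fin 4 → Fin (2*3-2)) := by
    intro i j hij
    fin_cases i <;> fin_cases j <;> simp_all <;>
      first
        | rfl
        | (exfalso; revert hij; simp [hcp', hcq', hcr', hpq, hpr, hqr,
            Ne.symm hcp', Ne.symm hcq', Ne.symm hcr', Ne.symm hpq, Ne.symm hpr, Ne.symm hqr])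
  let e : Fin (2*3-2) ≃ Fin (2*3-2) :=
    Equiv.ofBijective _ (Finite.injective_iff_bijective.mp hinj)
  have he : ∀ i, e i = ![c, p, q, r] i := fun i => rfl
  have hic : ∀ i : Fin (2*3-2), (e i = c ↔ i = 0) := by
    intro i
    fin_cases i <;>
      simp [he, Ne.symm hcp', Ne.symm hcq', Ne.symm hcr', Fin.ext_iff] <;> decide
  refine ⟨e, fun i j => ?_⟩
  rw [hchar (e i) (e j)]
  simp only [ne_eq, hic]

end Canon23
section Struct
variable {m : ℕ} {G : SimpleGraph (Fin m)}

lemma aux_card4_le {α : Type*} [Finite α] (a b c d : α) : ({a, b, c, d} : Set α).ncard ≤ 4 := by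
  have h1 := Set.ncard_insert_le a ({b, c, d} : Set α)
  have h2 := Set.ncard_insert_le b ({c, d} : Set α)
  have h3 := Set.ncard_insert_le c ({d} : Set α)
  have h4 : ({d} : Set α).ncard = 1 := Set.ncard_singleton d
  omega

lemma aux_card6_le {α : Type*} [Finite α] (a b c d e f : α) :
    ({a, b, c, d, e, f} : Set α).ncard ≤ 6 := by
  have h1 := Set.ncard_insert_le a ({b, c, d, e, f} : Set α)
  have h2 := Set.ncard_insert_le b ({c, d, e, f} : Set α)
  have h3 := aux_card4_le c d e f
  omega

lemma aux_exists_adj_deg3 (hm : 5 ≤ m) (hc : G.Connected)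
    (hdeg : ∀ v, (G.neighborSet v).ncard = 1 ∨ (G.neighborSet v).ncard = 3) :
    ∃ a b, G.Adj a b ∧ (G.neighborSet a).ncard = 3 ∧ (G.neighborSet b).ncard = 3 := by
  obtain ⟨a, ha3⟩ := aux_exists_deg3 (by omega) hc hdeg
  obtain ⟨p, q, r, hpq, hpr, hqr, hset⟩ := Set.ncard_eq_three.mp ha3
  have hap : G.Adj a p := aux_adj_of_mem hset (by simp)
  have haq : G.Adj a q := aux_adj_of_mem hset (by simp)
  have har : G.Adj a r := aux_adj_of_mem hset (by simp)
  by_cases h1 : (G.neighborSet p).ncard = 3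
  · exact ⟨a, p, hap, ha3, h1⟩
  by_cases h2 : (G.neighborSet q).ncard = 3
  · exact ⟨a, q, haq, ha3, h2⟩
  by_cases h3 : (G.neighborSet r).ncard = 3
  · exact ⟨a, r, har, ha3, h3⟩
  exfalso
  have hnp : G.neighborSet p = {a} := aux_nbr_eq ((hdeg p).resolve_right h1) hap.symm
  have hnq : G.neighborSet q = {a} := aux_nbr_eq ((hdeg q).resolve_right h2) haq.symm
  have hnr : G.neighborSet r = {a} := aux_nbr_eq ((hdeg r).resolve_right h3) har.symm
  have hcl : ∀ u ∈ ({a, p, q, r} : Set (Fin m)), ∀ v, G.Adj u v →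
      v ∈ ({a, p, q, r} : Set (Fin m)) := by
    rintro u hu v hv
    have hvmem : v ∈ G.neighborSet u := hv
    simp only [Set.mem_insert_iff, Set.mem_singleton_iff] at hu ⊢
    rcases hu with rfl | rfl | rfl | rfl
    · rw [hset] at hvmem; simp at hvmem; tauto
    · rw [hnp] at hvmem; simp at hvmem; tauto
    · rw [hnq] at hvmem; simp at hvmem; tauto
    · rw [hnr] at hvmem; simp at hvmem; tauto
  have hall := aux_univ_mem hc _ hcl (by simp : a ∈ ({a, p, q, r} : Set (Fin m)))
  have hsub : (Set.univ : Set (Fin m)) ⊆ {a, p, q, r} := fun x _ => hall x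
  have hle := Set.ncard_le_ncard hsub (Set.toFinite _)
  have h4 := aux_card4_le a p q r
  rw [Set.ncard_univ] at hle
  simp only [Nat.card_eq_fintype_card, Fintype.card_fin] at hle
  omega

lemma aux_pair_struct (hacyc : G.IsAcyclic) {a b : Fin m} (hab : G.Adj a b)
    (ha : (G.neighborSet a).ncard = 3) (hb : (G.neighborSet b).ncard = 3) :
    ∃ x1 x2 y1 y2, G.neighborSet a = {b, x1, x2} ∧ G.neighborSet b = {a, y1, y2} ∧
      x1 ≠ x2 ∧ y1 ≠ y2 ∧ x1 ≠ b ∧ x2 ≠ b ∧ y1 ≠ a ∧ y2 ≠ a ∧ x1 ≠ a ∧ x2 ≠ a ∧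
      y1 ≠ b ∧ y2 ≠ b ∧ x1 ≠ y1 ∧ x1 ≠ y2 ∧ x2 ≠ y1 ∧ x2 ≠ y2 := by
  obtain ⟨x1, x2, hx1b, hx2b, hx12, hsa⟩ := aux_one_of_three ha (hab : b ∈ G.neighborSet a)
  obtain ⟨y1, y2, hy1a, hy2a, hy12, hsb⟩ := aux_one_of_three hb (hab.symm : a ∈ G.neighborSet b)
  have hax1 : G.Adj a x1 := aux_adj_of_mem hsa (by simp)
  have hax2 : G.Adj a x2 := aux_adj_of_mem hsa (by simp)
  have hby1 : G.Adj b y1 := aux_adj_of_mem hsb (by simp)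
  have hby2 : G.Adj b y2 := aux_adj_of_mem hsb (by simp)
  have hxy : ∀ x y, G.Adj a x → G.Adj b y → x ≠ y := by
    rintro x y hax hby rfl
    exact aux_no3 hacyc hab hby hax.symm
  exact ⟨x1, x2, y1, y2, hsa, hsb, hx12, hy12, hx1b, hx2b, hy1a, hy2a,
    hax1.ne', hax2.ne', hby1.ne', hby2.ne',
    hxy _ _ hax1 hby1, hxy _ _ hax1 hby2, hxy _ _ hax2 hby1, hxy _ _ hax2 hby2⟩

end Struct
section Canon4

lemma aux4_leaf {G : SimpleGraph (Fin (2*4-2))} (hacyc : G.IsAcyclic)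
    {a b x1 x2 y1 y2 : Fin (2*4-2)}
    (huniv : ∀ v : Fin (2*4-2), v = a ∨ v = b ∨ v = x1 ∨ v = x2 ∨ v = y1 ∨ v = y2)
    (hdeg : ∀ v, (G.neighborSet v).ncard = 1 ∨ (G.neighborSet v).ncard = 3)
    (hab : G.Adj a b)
    (hna : G.neighborSet a = {b, x1, x2}) (hnb : G.neighborSet b = {a, y1, y2})
    (hx1b : x1 ≠ b) (hay1 : a ≠ y1) (hay2 : a ≠ y2) :
    G.neighborSet x1 = {a} := by
  have hax1 : G.Adj a x1 := aux_adj_of_mem hna (by simp)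
  have hax2 : G.Adj a x2 := aux_adj_of_mem hna (by simp)
  have hby1 : G.Adj b y1 := aux_adj_of_mem hnb (by simp)
  have hby2 : G.Adj b y2 := aux_adj_of_mem hnb (by simp)
  have hsub : ∀ v, G.Adj x1 v → v = a := by
    intro v hv
    rcases huniv v with rfl | rfl | rfl | rfl | rfl | rfl
    · rfl
    · exact absurd (aux_no3 hacyc hab hv.symm hax1.symm) (by simp)
    · exact absurd rfl hv.ne
    · exact absurd (aux_no3 hacyc hax1 hv hax2.symm) (by simp)
    · exact absurd (aux_no4 hacyc hab hby1 hv.symm hax1.symm hay1 (Ne.symm hx1b)) (by simp)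
    · exact absurd (aux_no4 hacyc hab hby2 hv.symm hax1.symm hay2 (Ne.symm hx1b)) (by simp)
  rcases hdeg x1 with h1 | h3
  · exact aux_nbr_eq h1 hax1.symm
  · exfalso
    have hss : G.neighborSet x1 ⊆ {a} := fun v hv => hsub v hv
    have := Set.ncard_le_ncard hss (Set.toFinite _)
    rw [Set.ncard_singleton] at this
    omega

set_option maxHeartbeats 1600000 in
lemma canon4 (T : PhyloTree 4) :
    ∃ e : Fin (2*4-2) ≃ Fin (2*4-2), ∀ i j, T.adj.Adj (e i) (e j) ↔
      ((i = 0 ∧ (j = 1 ∨ j = 2 ∨ j = 3)) ∨ (i = 1 ∧ (j = 0 ∨ j = 4 ∨ j = 5)) ∨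
       ((i = 2 ∨ i = 3) ∧ j = 0) ∨ ((i = 4 ∨ i = 5) ∧ j = 1)) := by
  obtain ⟨a, b, hab, ha3, hb3⟩ :=
    aux_exists_adj_deg3 (by omega) T.connected T.degOneOrThree
  obtain ⟨x1, x2, y1, y2, hna, hnb, hx12, hy12, hx1b, hx2b, hy1a, hy2a,
    hx1a, hx2a, hy1b, hy2b, hx1y1, hx1y2, hx2y1, hx2y2⟩ :=
    aux_pair_struct T.acyclic hab ha3 hb3
  have hax1 : T.adj.Adj a x1 := aux_adj_of_mem hna (by simp)
  have hax2 : T.adj.Adj a x2 := aux_adj_of_mem hna (by simp)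
  have hby1 : T.adj.Adj b y1 := aux_adj_of_mem hnb (by simp)
  have hby2 : T.adj.Adj b y2 := aux_adj_of_mem hnb (by simp)
  have hba := hab.ne'
  have huniv : ∀ v : Fin (2*4-2), v = a ∨ v = b ∨ v = x1 ∨ v = x2 ∨ v = y1 ∨ v = y2 := by
    have hcard : ({a, b, x1, x2, y1, y2} : Set (Fin (2*4-2))).ncard = 6 := by
      rw [Set.ncard_insert_of_notMem
            (by simp [hab.ne, Ne.symm hx1a, Ne.symm hx2a, Ne.symm hy1a, Ne.symm hy2a]),
          Set.ncard_insert_of_notMem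
            (by simp [Ne.symm hx1b, Ne.symm hx2b, Ne.symm hy1b, Ne.symm hy2b]),
          Set.ncard_insert_of_notMem (by simp [hx12, hx1y1, hx1y2]),
          Set.ncard_insert_of_notMem (by simp [hx2y1, hx2y2]),
          Set.ncard_insert_of_notMem (by simp [hy12]), Set.ncard_singleton]
    have hequniv : ({a, b, x1, x2, y1, y2} : Set (Fin (2*4-2))) = Set.univ := by
      refine Set.eq_of_subset_of_ncard_le (Set.subset_univ _) ?_ (Set.toFinite _)
      rw [Set.ncard_univ]
      simp [hcard]
    intro v
    have : v ∈ ({a, b, x1, x2, y1, y2} : Set (Fin (2*4-2))) := hequniv ▸ Set.mem_univ v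
    simpa using this
  have hnx1 : T.adj.neighborSet x1 = {a} :=
    aux4_leaf T.acyclic huniv T.degOneOrThree hab hna hnb hx1b (Ne.symm hy1a) (Ne.symm hy2a)
  have hnx2 : T.adj.neighborSet x2 = {a} := by
    refine aux4_leaf (a := a) (b := b) (x1 := x2) (x2 := x1) (y1 := y1) (y2 := y2)
      T.acyclic (fun v => by rcases huniv v with h|h|h|h|h|h <;> tauto)
      T.degOneOrThree hab ?_ hnb hx2b (Ne.symm hy1a) (Ne.symm hy2a)
    rw [hna]
    exact congrArg (insert b) (Set.pair_comm x1 x2)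
  have hny1 : T.adj.neighborSet y1 = {b} :=
    aux4_leaf (a := b) (b := a) (x1 := y1) (x2 := y2) (y1 := x1) (y2 := x2)
      T.acyclic (fun v => by rcases huniv v with h|h|h|h|h|h <;> tauto)
      T.degOneOrThree hab.symm hnb hna hy1a (Ne.symm hx1b) (Ne.symm hx2b)
  have hny2 : T.adj.neighborSet y2 = {b} := by
    refine aux4_leaf (a := b) (b := a) (x1 := y2) (x2 := y1) (y1 := x1) (y2 := x2)
      T.acyclic (fun v => by rcases huniv v with h|h|h|h|h|h <;> tauto)
      T.degOneOrThree hab.symm ?_ hna hy2a (Ne.symm hx1b) (Ne.symm hx2b)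
    rw [hnb]
    exact congrArg (insert a) (Set.pair_comm y1 y2)
  have hchar : ∀ u v, T.adj.Adj u v ↔
      ((u = a ∧ (v = b ∨ v = x1 ∨ v = x2)) ∨ (u = b ∧ (v = a ∨ v = y1 ∨ v = y2)) ∨
       ((u = x1 ∨ u = x2) ∧ v = a) ∨ ((u = y1 ∨ u = y2) ∧ v = b)) := by
    intro u v
    constructor
    · intro h
      have hm : v ∈ T.adj.neighborSet u := h
      rcases huniv u with rfl | rfl | rfl | rfl | rfl | rfl
      · rw [hna] at hm; simp at hm; tauto
      · rw [hnb] at hm; simp at hm; tauto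
      · rw [hnx1] at hm; simp at hm; tauto
      · rw [hnx2] at hm; simp at hm; tauto
      · rw [hny1] at hm; simp at hm; tauto
      · rw [hny2] at hm; simp at hm; tauto
    · rintro (⟨rfl, (rfl | rfl | rfl)⟩ | ⟨rfl, (rfl | rfl | rfl)⟩ |
        ⟨(rfl | rfl), rfl⟩ | ⟨(rfl | rfl), rfl⟩)
      exacts [hab, hax1, hax2, hab.symm, hby1, hby2, hax1.symm, hax2.symm,
        hby1.symm, hby2.symm]
  -- the equivalence
  have hv5 : (![a, b, x1, x2, y1, y2] : Fin (2*4-2) → Fin (2*4-2)) 5 = y2 := rfl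
  have hg : Function.LeftInverse
      (fun v => if v = a then (0 : Fin (2*4-2)) else if v = b then 1 else if v = x1 then 2
        else if v = x2 then 3 else if v = y1 then 4 else 5)
      (![a, b, x1, x2, y1, y2] : Fin (2*4-2) → Fin (2*4-2)) := by
    intro i
    fin_cases i <;>
      simp [hv5, hba, hx1a, hx1b, hx2a, hx2b, hx12, Ne.symm hx12, hy1a, hy1b, hy2a, hy2b,
        Ne.symm hx1y1, Ne.symm hx2y1, Ne.symm hx1y2, Ne.symm hx2y2, hy12, Ne.symm hy12]
  have hinj : Function.Injective (![a, b, x1, x2, y1, y2] : Fin (2*4-2) → Fin (2*4-2)) :=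
    hg.injective
  let e : Fin (2*4-2) ≃ Fin (2*4-2) :=
    Equiv.ofBijective _ (Finite.injective_iff_bijective.mp hinj)
  have he0 : e 0 = a := by simp [e]
  have he1 : e 1 = b := by simp [e]
  have he2 : e 2 = x1 := by simp [e]
  have he3 : e 3 = x2 := by simp [e]
  have he4 : e 4 = y1 := by simp [e]
  have he5 : e 5 = y2 := by simp [e, hv5]
  have hiff : ∀ (w : Fin (2*4-2)) (i0 : Fin (2*4-2)), e i0 = w →
      ∀ i, (e i = w ↔ i = i0) := by
    intro w i0 h0 i
    constructor
    · intro h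
      exact e.injective (by rw [h, h0])
    · intro h
      rw [h, h0]
  refine ⟨e, fun i j => ?_⟩
  rw [hchar (e i) (e j)]
  simp only [hiff a 0 he0, hiff b 1 he1, hiff x1 2 he2, hiff x2 3 he3,
    hiff y1 4 he4, hiff y2 5 he5]

end Canon4
section Canon5

lemma aux5_leaf {G : SimpleGraph (Fin (2*5-2))} (hacyc : G.IsAcyclic)
    {A B C w p1 p2 q1 q2 : Fin (2*5-2)}
    (huniv : ∀ v : Fin (2*5-2), v = A ∨ v = B ∨ v = C ∨ v = w ∨ v = p1 ∨ v = p2 ∨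
      v = q1 ∨ v = q2)
    (hdeg : ∀ v, (G.neighborSet v).ncard = 1 ∨ (G.neighborSet v).ncard = 3)
    (hAB : G.Adj A B) (hBC : G.Adj B C)
    (hnA : G.neighborSet A = {B, p1, p2}) (hnB : G.neighborSet B = {A, C, w})
    (hnC : G.neighborSet C = {B, q1, q2})
    (hAC : A ≠ C) (hp1B : p1 ≠ B) (hAw : A ≠ w) (hq1B : q1 ≠ B) (hq2B : q2 ≠ B)
    (hAq1 : A ≠ q1) (hAq2 : A ≠ q2) :
    G.neighborSet p1 = {A} := by
  have hAp1 : G.Adj A p1 := aux_adj_of_mem hnA (by simp)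
  have hAp2 : G.Adj A p2 := aux_adj_of_mem hnA (by simp)
  have hBw : G.Adj B w := aux_adj_of_mem hnB (by simp)
  have hCq1 : G.Adj C q1 := aux_adj_of_mem hnC (by simp)
  have hCq2 : G.Adj C q2 := aux_adj_of_mem hnC (by simp)
  have hsub : ∀ v, G.Adj p1 v → v = A := by
    intro v hv
    rcases huniv v with rfl | rfl | rfl | rfl | rfl | rfl | rfl | rfl
    · rfl
    · exact absurd (aux_no3 hacyc hAB hv.symm hAp1.symm) (by simp)
    · exact absurd (aux_no4 hacyc hAB hBC hv.symm hAp1.symm hAC (Ne.symm hp1B)) (by simp)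
    · exact absurd (aux_no4 hacyc hAp1 hv hBw.symm hAB.symm hAw hp1B) (by simp)
    · exact absurd rfl hv.ne
    · exact absurd (aux_no3 hacyc hAp1 hv hAp2.symm) (by simp)
    · exact absurd (aux_no5 hacyc hAp1 hv hCq1.symm hBC.symm hAB.symm hAq1 hAC hq1B) (by simp)
    · exact absurd (aux_no5 hacyc hAp1 hv hCq2.symm hBC.symm hAB.symm hAq2 hAC hq2B) (by simp)
  rcases hdeg p1 with h1 | h3
  · exact aux_nbr_eq h1 hAp1.symm
  · exfalso
    have hss : G.neighborSet p1 ⊆ {A} := fun v hv => hsub v hv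
    have := Set.ncard_le_ncard hss (Set.toFinite _)
    rw [Set.ncard_singleton] at this
    omega

set_option maxHeartbeats 3200000 in
lemma canon5 (T : PhyloTree 5) :
    ∃ e : Fin (2*5-2) ≃ Fin (2*5-2), ∀ i j, T.adj.Adj (e i) (e j) ↔
      ((i = 0 ∧ (j = 1 ∨ j = 4 ∨ j = 5)) ∨ (i = 1 ∧ (j = 0 ∨ j = 2 ∨ j = 3)) ∨
       (i = 2 ∧ (j = 1 ∨ j = 6 ∨ j = 7)) ∨ (i = 3 ∧ j = 1) ∨
       ((i = 4 ∨ i = 5) ∧ j = 0) ∨ ((i = 6 ∨ i = 7) ∧ j = 2)) := by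
  obtain ⟨a, b, hab, ha3, hb3⟩ :=
    aux_exists_adj_deg3 (by omega) T.connected T.degOneOrThree
  obtain ⟨x1, x2, y1, y2, hna, hnb, hx12, hy12, hx1b, hx2b, hy1a, hy2a,
    hx1a, hx2a, hy1b, hy2b, hx1y1, hx1y2, hx2y1, hx2y2⟩ :=
    aux_pair_struct T.acyclic hab ha3 hb3
  have hax1 : T.adj.Adj a x1 := aux_adj_of_mem hna (by simp)
  have hax2 : T.adj.Adj a x2 := aux_adj_of_mem hna (by simp)
  have hby1 : T.adj.Adj b y1 := aux_adj_of_mem hnb (by simp)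
  have hby2 : T.adj.Adj b y2 := aux_adj_of_mem hnb (by simp)
  -- a third internal vertex exists
  have hthird : ∃ A B C, T.adj.Adj A B ∧ T.adj.Adj B C ∧ A ≠ C ∧
      (T.adj.neighborSet A).ncard = 3 ∧ (T.adj.neighborSet B).ncard = 3 ∧
      (T.adj.neighborSet C).ncard = 3 := by
    by_cases h1 : (T.adj.neighborSet x1).ncard = 3
    · exact ⟨b, a, x1, hab.symm, hax1, Ne.symm hx1b, hb3, ha3, h1⟩
    by_cases h2 : (T.adj.neighborSet x2).ncard = 3
    · exact ⟨b, a, x2, hab.symm, hax2, Ne.symm hx2b, hb3, ha3, h2⟩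
    by_cases h3 : (T.adj.neighborSet y1).ncard = 3
    · exact ⟨a, b, y1, hab, hby1, Ne.symm hy1a, ha3, hb3, h3⟩
    by_cases h4 : (T.adj.neighborSet y2).ncard = 3
    · exact ⟨a, b, y2, hab, hby2, Ne.symm hy2a, ha3, hb3, h4⟩
    exfalso
    have hnx1 : T.adj.neighborSet x1 = {a} :=
      aux_nbr_eq ((T.degOneOrThree x1).resolve_right h1) hax1.symm
    have hnx2 : T.adj.neighborSet x2 = {a} :=
      aux_nbr_eq ((T.degOneOrThree x2).resolve_right h2) hax2.symm
    have hny1 : T.adj.neighborSet y1 = {b} :=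
      aux_nbr_eq ((T.degOneOrThree y1).resolve_right h3) hby1.symm
    have hny2 : T.adj.neighborSet y2 = {b} :=
      aux_nbr_eq ((T.degOneOrThree y2).resolve_right h4) hby2.symm
    have hcl : ∀ u ∈ ({a, b, x1, x2, y1, y2} : Set (Fin (2*5-2))), ∀ v, T.adj.Adj u v →
        v ∈ ({a, b, x1, x2, y1, y2} : Set (Fin (2*5-2))) := by
      rintro u hu v hv
      have hvmem : v ∈ T.adj.neighborSet u := hv
      simp only [Set.mem_insert_iff, Set.mem_singleton_iff] at hu ⊢
      rcases hu with rfl | rfl | rfl | rfl | rfl | rfl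
      · rw [hna] at hvmem; simp at hvmem; tauto
      · rw [hnb] at hvmem; simp at hvmem; tauto
      · rw [hnx1] at hvmem; simp at hvmem; tauto
      · rw [hnx2] at hvmem; simp at hvmem; tauto
      · rw [hny1] at hvmem; simp at hvmem; tauto
      · rw [hny2] at hvmem; simp at hvmem; tauto
    have hall := aux_univ_mem T.connected _ hcl
      (by simp : a ∈ ({a, b, x1, x2, y1, y2} : Set (Fin (2*5-2))))
    have hsub : (Set.univ : Set (Fin (2*5-2))) ⊆ {a, b, x1, x2, y1, y2} :=
      fun x _ => hall x
    have hle := Set.ncard_le_ncard hsub (Set.toFinite _)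
    have h6 := aux_card6_le a b x1 x2 y1 y2
    rw [Set.ncard_univ] at hle
    simp only [Nat.card_eq_fintype_card, Fintype.card_fin] at hle
    omega
  obtain ⟨A, B, C, hAB, hBC, hAC, hA3, hB3, hC3⟩ := hthird
  clear hna hnb hx12 hy12 hx1b hx2b hy1a hy2a hx1a hx2a hy1b hy2b
    hx1y1 hx1y2 hx2y1 hx2y2 hax1 hax2 hby1 hby2 hab ha3 hb3
  obtain ⟨p1, p2, hp1B, hp2B, hp12, hnA⟩ := aux_one_of_three hA3 (hAB : B ∈ T.adj.neighborSet A)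
  obtain ⟨q1, q2, hq1B, hq2B, hq12, hnC⟩ :=
    aux_one_of_three hC3 (hBC.symm : B ∈ T.adj.neighborSet C)
  obtain ⟨w, hwA, hwC, hnB⟩ :=
    aux_two_of_three hB3 (hAB.symm : A ∈ T.adj.neighborSet B) (hBC : C ∈ T.adj.neighborSet B) hAC
  have hAp1 : T.adj.Adj A p1 := aux_adj_of_mem hnA (by simp)
  have hAp2 : T.adj.Adj A p2 := aux_adj_of_mem hnA (by simp)
  have hCq1 : T.adj.Adj C q1 := aux_adj_of_mem hnC (by simp)
  have hCq2 : T.adj.Adj C q2 := aux_adj_of_mem hnC (by simp)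
  have hBw : T.adj.Adj B w := aux_adj_of_mem hnB (by simp)
  -- distinctness
  have hp1A : p1 ≠ A := hAp1.ne'
  have hp2A : p2 ≠ A := hAp2.ne'
  have hq1C : q1 ≠ C := hCq1.ne'
  have hq2C : q2 ≠ C := hCq2.ne'
  have hwB : w ≠ B := hBw.ne'
  have hp1C : p1 ≠ C := by rintro rfl; exact aux_no3 T.acyclic hAB hBC hAp1.symm
  have hp2C : p2 ≠ C := by rintro rfl; exact aux_no3 T.acyclic hAB hBC hAp2.symm
  have hq1A : q1 ≠ A := by rintro rfl; exact aux_no3 T.acyclic hAB hBC hCq1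
  have hq2A : q2 ≠ A := by rintro rfl; exact aux_no3 T.acyclic hAB hBC hCq2
  have hp1w : p1 ≠ w := by rintro rfl; exact aux_no3 T.acyclic hAB hBw hAp1.symm
  have hp2w : p2 ≠ w := by rintro rfl; exact aux_no3 T.acyclic hAB hBw hAp2.symm
  have hq1w : q1 ≠ w := by rintro rfl; exact aux_no3 T.acyclic hBC hCq1 hBw.symm
  have hq2w : q2 ≠ w := by rintro rfl; exact aux_no3 T.acyclic hBC hCq2 hBw.symm
  have hp1q1 : p1 ≠ q1 := by
    rintro rfl; exact aux_no4 T.acyclic hAB hBC hCq1 hAp1.symm hAC (Ne.symm hq1B)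
  have hp1q2 : p1 ≠ q2 := by
    rintro rfl; exact aux_no4 T.acyclic hAB hBC hCq2 hAp1.symm hAC (Ne.symm hq2B)
  have hp2q1 : p2 ≠ q1 := by
    rintro rfl; exact aux_no4 T.acyclic hAB hBC hCq1 hAp2.symm hAC (Ne.symm hq1B)
  have hp2q2 : p2 ≠ q2 := by
    rintro rfl; exact aux_no4 T.acyclic hAB hBC hCq2 hAp2.symm hAC (Ne.symm hq2B)
  -- universe
  have huniv : ∀ v : Fin (2*5-2), v = A ∨ v = B ∨ v = C ∨ v = w ∨ v = p1 ∨ v = p2 ∨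
      v = q1 ∨ v = q2 := by
    have hcard : ({A, B, C, w, p1, p2, q1, q2} : Set (Fin (2*5-2))).ncard = 8 := by
      rw [Set.ncard_insert_of_notMem
            (by simp [hAB.ne, hAC, Ne.symm hwA, Ne.symm hp1A, Ne.symm hp2A, Ne.symm hq1A, Ne.symm hq2A]),
          Set.ncard_insert_of_notMem
            (by simp [hBC.ne, Ne.symm hwB, Ne.symm hp1B, Ne.symm hp2B,
              Ne.symm hq1B, Ne.symm hq2B]),
          Set.ncard_insert_of_notMem
            (by simp [Ne.symm hwC, Ne.symm hp1C, Ne.symm hp2C, Ne.symm hq1C, Ne.symm hq2C]),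
          Set.ncard_insert_of_notMem
            (by simp [Ne.symm hp1w, Ne.symm hp2w, Ne.symm hq1w, Ne.symm hq2w]),
          Set.ncard_insert_of_notMem (by simp [hp12, hp1q1, hp1q2]),
          Set.ncard_insert_of_notMem (by simp [hp2q1, hp2q2]),
          Set.ncard_insert_of_notMem (by simp [hq12]), Set.ncard_singleton]
    have hequniv : ({A, B, C, w, p1, p2, q1, q2} : Set (Fin (2*5-2))) = Set.univ := by
      refine Set.eq_of_subset_of_ncard_le (Set.subset_univ _) ?_ (Set.toFinite _)
      rw [Set.ncard_univ]
      simp [hcard]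
    intro v
    have : v ∈ ({A, B, C, w, p1, p2, q1, q2} : Set (Fin (2*5-2))) := hequniv ▸ Set.mem_univ v
    simpa using this
  -- leaves
  have hnp1 : T.adj.neighborSet p1 = {A} :=
    aux5_leaf T.acyclic huniv T.degOneOrThree hAB hBC hnA hnB hnC hAC hp1B
      (Ne.symm hwA) hq1B hq2B (Ne.symm hq1A) (Ne.symm hq2A)
  have hnp2 : T.adj.neighborSet p2 = {A} := by
    refine aux5_leaf (A := A) (B := B) (C := C) (w := w) (p1 := p2) (p2 := p1)
      (q1 := q1) (q2 := q2) T.acyclic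
      (fun v => by rcases huniv v with h|h|h|h|h|h|h|h <;> tauto)
      T.degOneOrThree hAB hBC ?_ hnB hnC hAC hp2B
      (Ne.symm hwA) hq1B hq2B (Ne.symm hq1A) (Ne.symm hq2A)
    rw [hnA]
    exact congrArg (insert B) (Set.pair_comm p1 p2)
  have hnq1 : T.adj.neighborSet q1 = {C} := by
    refine aux5_leaf (A := C) (B := B) (C := A) (w := w) (p1 := q1) (p2 := q2)
      (q1 := p1) (q2 := p2) T.acyclic
      (fun v => by rcases huniv v with h|h|h|h|h|h|h|h <;> tauto)
      T.degOneOrThree hBC.symm hAB.symm hnC ?_ hnA (Ne.symm hAC) hq1B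
      (Ne.symm hwC) hp1B hp2B (Ne.symm hp1C) (Ne.symm hp2C)
    rw [hnB]
    exact Set.insert_comm A C {w}
  have hnq2 : T.adj.neighborSet q2 = {C} := by
    refine aux5_leaf (A := C) (B := B) (C := A) (w := w) (p1 := q2) (p2 := q1)
      (q1 := p1) (q2 := p2) T.acyclic
      (fun v => by rcases huniv v with h|h|h|h|h|h|h|h <;> tauto)
      T.degOneOrThree hBC.symm hAB.symm ?_ ?_ hnA (Ne.symm hAC) hq2B
      (Ne.symm hwC) hp1B hp2B (Ne.symm hp1C) (Ne.symm hp2C)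
    · rw [hnC]
      exact congrArg (insert B) (Set.pair_comm q1 q2)
    · rw [hnB]
      exact Set.insert_comm A C {w}
  have hnw : T.adj.neighborSet w = {B} := by
    have hsubw : ∀ v, T.adj.Adj w v → v = B := by
      intro v hv
      rcases huniv v with rfl | rfl | rfl | rfl | rfl | rfl | rfl | rfl
      · exact absurd (aux_no3 T.acyclic hAB hBw hv) (by simp)
      · rfl
      · exact absurd (aux_no3 T.acyclic hBC hv.symm hBw.symm) (by simp)
      · exact absurd rfl hv.ne
      · have hm : w ∈ T.adj.neighborSet v := hv.symm
        rw [hnp1] at hm; simp at hm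
        exact absurd hm hwA
      · have hm : w ∈ T.adj.neighborSet v := hv.symm
        rw [hnp2] at hm; simp at hm
        exact absurd hm hwA
      · have hm : w ∈ T.adj.neighborSet v := hv.symm
        rw [hnq1] at hm; simp at hm
        exact absurd hm hwC
      · have hm : w ∈ T.adj.neighborSet v := hv.symm
        rw [hnq2] at hm; simp at hm
        exact absurd hm hwC
    rcases T.degOneOrThree w with h1 | h3
    · exact aux_nbr_eq h1 hBw.symm
    · exfalso
      have hss : T.adj.neighborSet w ⊆ {B} := fun v hv => hsubw v hv
      have := Set.ncard_le_ncard hss (Set.toFinite _)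
      rw [Set.ncard_singleton] at this
      omega
  -- characterization
  have hchar : ∀ u v, T.adj.Adj u v ↔
      ((u = A ∧ (v = B ∨ v = p1 ∨ v = p2)) ∨ (u = B ∧ (v = A ∨ v = C ∨ v = w)) ∨
       (u = C ∧ (v = B ∨ v = q1 ∨ v = q2)) ∨ (u = w ∧ v = B) ∨
       ((u = p1 ∨ u = p2) ∧ v = A) ∨ ((u = q1 ∨ u = q2) ∧ v = C)) := by
    intro u v
    constructor
    · intro h
      have hm : v ∈ T.adj.neighborSet u := h
      rcases huniv u with rfl | rfl | rfl | rfl | rfl | rfl | rfl | rfl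
      · rw [hnA] at hm; simp at hm; tauto
      · rw [hnB] at hm; simp at hm; tauto
      · rw [hnC] at hm; simp at hm; tauto
      · rw [hnw] at hm; simp at hm; tauto
      · rw [hnp1] at hm; simp at hm; tauto
      · rw [hnp2] at hm; simp at hm; tauto
      · rw [hnq1] at hm; simp at hm; tauto
      · rw [hnq2] at hm; simp at hm; tauto
    · rintro (⟨rfl, (rfl | rfl | rfl)⟩ | ⟨rfl, (rfl | rfl | rfl)⟩ |
        ⟨rfl, (rfl | rfl | rfl)⟩ | ⟨rfl, rfl⟩ | ⟨(rfl | rfl), rfl⟩ | ⟨(rfl | rfl), rfl⟩)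
      exacts [hAB, hAp1, hAp2, hAB.symm, hBC, hBw, hBC.symm, hCq1, hCq2, hBw.symm,
        hAp1.symm, hAp2.symm, hCq1.symm, hCq2.symm]
  -- the equivalence
  have hv5 : (![A, B, C, w, p1, p2, q1, q2] : Fin (2*5-2) → Fin (2*5-2)) 5 = p2 := rfl
  have hv6 : (![A, B, C, w, p1, p2, q1, q2] : Fin (2*5-2) → Fin (2*5-2)) 6 = q1 := rfl
  have hv7 : (![A, B, C, w, p1, p2, q1, q2] : Fin (2*5-2) → Fin (2*5-2)) 7 = q2 := rfl
  have hg : Function.LeftInverse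
      (fun v => if v = A then (0 : Fin (2*5-2)) else if v = B then 1 else if v = C then 2
        else if v = w then 3 else if v = p1 then 4 else if v = p2 then 5
        else if v = q1 then 6 else 7)
      (![A, B, C, w, p1, p2, q1, q2] : Fin (2*5-2) → Fin (2*5-2)) := by
    intro i
    fin_cases i <;>
      simp [hv5, hv6, hv7, hAB.ne', hAC, Ne.symm hAC, hAB.ne, hBC.ne, hBC.ne',
        hwA, hwB, hwC, Ne.symm hwA, Ne.symm hwB, Ne.symm hwC,
        hp1A, hp1B, hp1C, hp1w, Ne.symm hp1A, Ne.symm hp1B, Ne.symm hp1C, Ne.symm hp1w,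
        hp2A, hp2B, hp2C, hp2w, Ne.symm hp2A, Ne.symm hp2B, Ne.symm hp2C, Ne.symm hp2w,
        hq1A, hq1B, hq1C, hq1w, Ne.symm hq1A, Ne.symm hq1B, Ne.symm hq1C, Ne.symm hq1w,
        hq2A, hq2B, hq2C, hq2w, Ne.symm hq2A, Ne.symm hq2B, Ne.symm hq2C, Ne.symm hq2w,
        hp12, Ne.symm hp12, hq12, Ne.symm hq12,
        hp1q1, hp1q2, hp2q1, hp2q2, Ne.symm hp1q1, Ne.symm hp1q2, Ne.symm hp2q1, Ne.symm hp2q2]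
  have hinj : Function.Injective (![A, B, C, w, p1, p2, q1, q2] :
      Fin (2*5-2) → Fin (2*5-2)) := hg.injective
  let e : Fin (2*5-2) ≃ Fin (2*5-2) :=
    Equiv.ofBijective _ (Finite.injective_iff_bijective.mp hinj)
  have he0 : e 0 = A := by simp [e]
  have he1 : e 1 = B := by simp [e]
  have he2 : e 2 = C := by simp [e]
  have he3 : e 3 = w := by simp [e]
  have he4 : e 4 = p1 := by simp [e]
  have he5 : e 5 = p2 := by simp [e, hv5]
  have he6 : e 6 = q1 := by simp [e, hv6]
  have he7 : e 7 = q2 := by simp [e, hv7]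
  have hiff : ∀ (z : Fin (2*5-2)) (i0 : Fin (2*5-2)), e i0 = z →
      ∀ i, (e i = z ↔ i = i0) := by
    intro z i0 h0 i
    constructor
    · intro h
      exact e.injective (by rw [h, h0])
    · intro h
      rw [h, h0]
  refine ⟨e, fun i j => ?_⟩
  rw [hchar (e i) (e j)]
  simp only [hiff A 0 he0, hiff B 1 he1, hiff C 2 he2, hiff w 3 he3,
    hiff p1 4 he4, hiff p2 5 he5, hiff q1 6 he6, hiff q2 7 he7]

end Canon5
lemma exists_iso3 (T T' : PhyloTree 3) :
    ∃ σ : Fin (2*3-2) ≃ Fin (2*3-2), ∀ u v, T'.adj.Adj (σ u) (σ v) ↔ T.adj.Adj u v := by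
  obtain ⟨e, he⟩ := canon3 T
  obtain ⟨e', he'⟩ := canon3 T'
  exact iso_of_canon _ e e' he he'

lemma exists_iso4 (T T' : PhyloTree 4) :
    ∃ σ : Fin (2*4-2) ≃ Fin (2*4-2), ∀ u v, T'.adj.Adj (σ u) (σ v) ↔ T.adj.Adj u v := by
  obtain ⟨e, he⟩ := canon4 T
  obtain ⟨e', he'⟩ := canon4 T'
  exact iso_of_canon _ e e' he he'

lemma exists_iso5 (T T' : PhyloTree 5) :
    ∃ σ : Fin (2*5-2) ≃ Fin (2*5-2), ∀ u v, T'.adj.Adj (σ u) (σ v) ↔ T.adj.Adj u v := by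
  obtain ⟨e, he⟩ := canon5 T
  obtain ⟨e', he'⟩ := canon5 T'
  exact iso_of_canon _ e e' he he'

/-- For 2 ≤ n ≤ 5 and every k ≥ 1, every binary phylogenetic tree on {1,…,n} is a
maximum parsimony tree for the same number of k-tuples of characters. -/
theorem stmt18 (n k : ℕ) (hn1 : 2 ≤ n) (hn2 : n ≤ 5) (hk : 1 ≤ k)
    (T T' : PhyloTree n) :
    Set.ncard {F : Fin k → Fin n → Bool | IsMPTree F T} =
      Set.ncard {F : Fin k → Fin n → Bool | IsMPTree F T'} := by
  interval_cases n
  · obtain ⟨σ, hσ⟩ := exists_iso2 T T'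
    obtain ⟨π, hπ⟩ := exists_pi T T' σ hσ
    exact (count_transfer T T' σ hσ π hπ).symm
  · obtain ⟨σ, hσ⟩ := exists_iso3 T T'
    obtain ⟨π, hπ⟩ := exists_pi T T' σ hσ
    exact (count_transfer T T' σ hσ π hπ).symm
  · obtain ⟨σ, hσ⟩ := exists_iso4 T T'
    obtain ⟨π, hπ⟩ := exists_pi T T' σ hσ
    exact (count_transfer T T' σ hσ π hπ).symm
  · obtain ⟨σ, hσ⟩ := exists_iso5 T T'
    obtain ⟨π, hπ⟩ := exists_pi T T' σ hσ
    exact (count_transfer T T' σ hσ π hπ).symm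
end
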